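/- arXiv:1604.04271 — 3 statements merged into one kernel-verified Lean document; each statement's English description precedes it below -/
import Mathlib

section
/- Let W be a tournament kernel on a probability space (S, μ), let Z be the associated collection of sets, let σ(Z) be the σ-algebra generated by Z, and let I ⊆ S be the non-atomic part of (S, σ(Z), μ), i.e. the complement of the union of all atoms of (S, σ(Z), μ). Then ∫_{I×I×I} W(x,y)W(y,z)W(z,x) dμ(x)dμ(y)dμ(z) = 0; in particular, if μ(I) > 0, the restriction of W to I has t(C_3, W|_I) = 0. -/
open MeasureTheory

/-- A tournament kernel on a probability space `(S, μ)`. -/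
def IsTournamentKernel {S : Type*} [MeasurableSpace S] (μ : Measure S)
    (W : S → S → ℝ) : Prop :=
  Measurable (Function.uncurry W) ∧ (∀ x y : S, 0 ≤ W x y ∧ W x y ≤ 1) ∧
  (∀ᵐ p ∂(μ.prod μ), W p.1 p.2 + W p.2 p.1 = 1)

/-- `A ≺ B`: `W = 1` almost everywhere on `A × B`. -/
def KPrec {S : Type*} [MeasurableSpace S] (μ : Measure S) (W : S → S → ℝ)
    (A B : Set S) : Prop :=
  ∀ᵐ p ∂(μ.prod μ), p.1 ∈ A → p.2 ∈ B → W p.1 p.2 = 1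

/-- The collection `Z`: measurable sets `A` admitting a partition `{B, C}` of the
complement of `A` with `B ≺ A`, `A ≺ C` and `B ≺ C`. -/
def memZ {S : Type*} [MeasurableSpace S] (μ : Measure S) (W : S → S → ℝ)
    (A : Set S) : Prop :=
  MeasurableSet A ∧ ∃ B C : Set S, MeasurableSet B ∧ MeasurableSet C ∧
    B ∪ C = Aᶜ ∧ B ∩ C = ∅ ∧ KPrec μ W B A ∧ KPrec μ W A C ∧ KPrec μ W B C

/-- `A` is an atom of the measure space `(S, m, μ)`. -/
def IsAtomOf {S : Type*} {m0 : MeasurableSpace S} (m : MeasurableSpace S)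
    (μ : @MeasureTheory.Measure S m0) (A : Set S) : Prop :=
  MeasurableSet[m] A ∧ 0 < μ A ∧
    ¬ ∃ A' : Set S, MeasurableSet[m] A' ∧ A' ⊆ A ∧ 0 < μ A' ∧ μ A' < μ A

/-- The non-atomic part of `(S, m, μ)`: the complement of the union of all atoms. -/
def nonAtomicPart {S : Type*} {m0 : MeasurableSpace S} (m : MeasurableSpace S)
    (μ : @MeasureTheory.Measure S m0) : Set S :=
  (⋃₀ {A : Set S | IsAtomOf m μ A})ᶜ

open MeasureTheory MeasurableSpace Set Filter
open scoped ENNReal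

section Aux
variable {S : Type*} [MeasurableSpace S] {μ : Measure S} {W : S → S → ℝ}

/-- A "down-set": everything in `B` beats everything outside. -/
def IsDown (μ : Measure S) (W : S → S → ℝ) (B : Set S) : Prop :=
  MeasurableSet B ∧ KPrec μ W B Bᶜ

lemma kprec_empty (A : Set S) : KPrec μ W ∅ A :=
  Filter.Eventually.of_forall fun p hp => absurd hp (Set.notMem_empty _)

lemma down_empty : IsDown μ W ∅ :=
  ⟨MeasurableSet.empty, kprec_empty _⟩

lemma kprec_rev {A C : Set S} [SFinite μ] (h : KPrec μ W A C) :
    ∀ᵐ p ∂(μ.prod μ), p.2 ∈ A → p.1 ∈ C → W p.2 p.1 = 1 :=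
  ((Measure.measurePreserving_swap (μ := μ) (ν := μ)).quasiMeasurePreserving.tendsto_ae).eventually h

lemma rect_null [IsProbabilityMeasure μ]
    (hsum : ∀ᵐ p ∂(μ.prod μ), W p.1 p.2 + W p.2 p.1 = 1)
    {B B' : Set S} (hB : IsDown μ W B) (hB' : IsDown μ W B') :
    (μ.prod μ) ((B \ B') ×ˢ (B' \ B)) = 0 := by
  rw [measure_eq_zero_iff_ae_notMem]
  filter_upwards [hB.2, kprec_rev hB'.2, hsum] with p h1 h2 h3 hp
  obtain ⟨⟨h1B, h1B'⟩, h2B', h2B⟩ := hp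
  have e1 : W p.1 p.2 = 1 := h1 h1B h2B
  have e2 : W p.2 p.1 = 1 := h2 h2B' h1B'
  rw [e1, e2] at h3
  norm_num at h3

lemma down_comp [IsProbabilityMeasure μ]
    (hsum : ∀ᵐ p ∂(μ.prod μ), W p.1 p.2 + W p.2 p.1 = 1)
    {B B' : Set S} (hB : IsDown μ W B) (hB' : IsDown μ W B') :
    μ (B \ B') = 0 ∨ μ (B' \ B) = 0 := by
  have h := rect_null hsum hB hB'
  rw [Measure.prod_prod] at h
  exact mul_eq_zero.mp h

lemma exists_dense_family (μ : Measure S) (W : S → S → ℝ) :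
    ∃ B : ℕ → Set S, (∀ n, IsDown μ W (B n)) ∧
      ∀ A, IsDown μ W A → μ A ∈ closure (Set.range fun n => μ (B n)) := by
  classical
  set T : Set ℝ≥0∞ := μ '' {A | IsDown μ W A} with hT
  have hT0 : (0 : ℝ≥0∞) ∈ T := ⟨∅, down_empty, by simp⟩
  haveI : Nonempty ↥T := ⟨⟨0, hT0⟩⟩
  obtain ⟨c, hc_cnt, hc_dense⟩ := TopologicalSpace.exists_countable_dense ↥T
  have hne : c.Nonempty := hc_dense.nonempty
  obtain ⟨f, hf⟩ := Set.Countable.exists_eq_range hc_cnt hne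
  have hmem : ∀ n : ℕ, ((f n : ℝ≥0∞)) ∈ T := fun n => (f n).2
  choose A hA hAμ using fun n => hmem n
  refine ⟨A, hA, ?_⟩
  intro D hD
  have hDT : μ D ∈ T := ⟨D, hD, rfl⟩
  have h1 : (⟨μ D, hDT⟩ : ↥T) ∈ closure c := hc_dense _
  have h2 : μ D ∈ closure (Subtype.val '' c) := closure_subtype.mp h1
  have h3 : Subtype.val '' c = Set.range fun n => μ (A n) := by
    rw [hf]
    ext v
    constructor
    · rintro ⟨w, ⟨n, rfl⟩, rfl⟩
      exact ⟨n, hAμ n⟩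
    · rintro ⟨n, rfl⟩
      exact ⟨f n, ⟨n, rfl⟩, (hAμ n).symm⟩
  rwa [h3] at h2

variable (B : ℕ → Set S)

lemma saturated {A : Set S}
    (hA : MeasurableSet[MeasurableSpace.generateFrom (Set.range B)] A) {x y : S}
    (hxy : ∀ n, x ∈ B n ↔ y ∈ B n) : x ∈ A ↔ y ∈ A := by
  refine MeasurableSpace.generateFrom_induction (Set.range B)
    (fun s _ => ∀ x y : S, (∀ n, x ∈ B n ↔ y ∈ B n) → (x ∈ s ↔ y ∈ s))
    ?_ ?_ ?_ ?_ A hA x y hxy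
  · rintro t ⟨n, rfl⟩ _ x y h
    exact h n
  · intro x y _
    simp
  · intro t _ ih x y h
    simp only [Set.mem_compl_iff]
    exact not_congr (ih x y h)
  · intro s _ ih x y h
    simp only [Set.mem_iUnion]
    exact exists_congr fun n => ih n x y h

lemma approx_down [IsProbabilityMeasure μ]
    (hsum : ∀ᵐ p ∂(μ.prod μ), W p.1 p.2 + W p.2 p.1 = 1)
    (hBd : ∀ n, IsDown μ W (B n))
    (hdense : ∀ A, IsDown μ W A → μ A ∈ closure (Set.range fun n => μ (B n)))
    {A : Set S} (hA : IsDown μ W A) :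
    ∃ E, MeasurableSet[MeasurableSpace.generateFrom (Set.range B)] E ∧
      MeasurableSet E ∧ μ (A \ E) = 0 ∧ μ (E \ A) = 0 := by
  classical
  set K₁ : Set ℕ := {n | μ (B n \ A) = 0} with hK₁
  set K₂ : Set ℕ := {n | μ (A \ B n) = 0} with hK₂
  set E₁ : Set S := ⋃ n ∈ K₁, B n with hE₁
  set E₂ : Set S := ⋂ n ∈ K₂, B n with hE₂
  have hcomp : ∀ n, n ∈ K₁ ∨ n ∈ K₂ := fun n => down_comp hsum (hBd n) hA
  have hE₁m : MeasurableSet E₁ := MeasurableSet.biUnion (Set.to_countable K₁)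
    fun n _ => (hBd n).1
  have hE₂m : MeasurableSet E₂ := MeasurableSet.biInter (Set.to_countable K₂)
    fun n _ => (hBd n).1
  have hE₁M : MeasurableSet[MeasurableSpace.generateFrom (Set.range B)] E₁ :=
    MeasurableSet.biUnion (Set.to_countable K₁)
      fun n _ => measurableSet_generateFrom ⟨n, rfl⟩
  have hE₂M : MeasurableSet[MeasurableSpace.generateFrom (Set.range B)] E₂ :=
    MeasurableSet.biInter (Set.to_countable K₂)
      fun n _ => measurableSet_generateFrom ⟨n, rfl⟩
  have hE₁A : μ (E₁ \ A) = 0 := by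
    refine measure_mono_null (t := ⋃ n ∈ K₁, (B n \ A)) ?_ ?_
    · intro x ⟨hx1, hx2⟩
      obtain ⟨n, hn, hxn⟩ := Set.mem_iUnion₂.mp hx1
      exact Set.mem_iUnion₂.mpr ⟨n, hn, hxn, hx2⟩
    · exact (measure_biUnion_null_iff (Set.to_countable K₁)).mpr fun n hn => hn
  have hAE₂ : μ (A \ E₂) = 0 := by
    refine measure_mono_null (t := ⋃ n ∈ K₂, (A \ B n)) ?_ ?_
    · intro x ⟨hx1, hx2⟩
      simp only [hE₂, Set.mem_iInter, not_forall] at hx2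
      obtain ⟨n, hn, hxn⟩ := hx2
      exact Set.mem_iUnion₂.mpr ⟨n, hn, hx1, hxn⟩
    · exact (measure_biUnion_null_iff (Set.to_countable K₂)).mpr fun n hn => hn
  have h1 : μ E₁ ≤ μ A := by
    calc μ E₁ = μ (E₁ ∩ A) + μ (E₁ \ A) := (measure_inter_add_diff E₁ hA.1).symm
    _ = μ (E₁ ∩ A) := by rw [hE₁A, add_zero]
    _ ≤ μ A := measure_mono Set.inter_subset_right
  have h2 : μ A ≤ μ E₂ := by
    calc μ A = μ (A ∩ E₂) + μ (A \ E₂) := (measure_inter_add_diff A hE₂m).symm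
    _ = μ (A ∩ E₂) := by rw [hAE₂, add_zero]
    _ ≤ μ E₂ := measure_mono Set.inter_subset_right
  have hgap : μ E₁ = μ A ∨ μ E₂ = μ A := by
    by_contra hcon
    push_neg at hcon
    have l1 : μ E₁ < μ A := lt_of_le_of_ne h1 hcon.1
    have l2 : μ A < μ E₂ := lt_of_le_of_ne h2 (Ne.symm hcon.2)
    obtain ⟨v, hv1, hv2⟩ := mem_closure_iff.mp (hdense A hA) _ isOpen_Ioo ⟨l1, l2⟩
    obtain ⟨n, rfl⟩ := hv2
    rcases hcomp n with h | h
    · exact absurd hv1.1 (not_lt.mpr (measure_mono (Set.subset_biUnion_of_mem h)))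
    · exact absurd hv1.2 (not_lt.mpr (measure_mono (Set.biInter_subset_of_mem h)))
  rcases hgap with h | h
  · refine ⟨E₁, hE₁M, hE₁m, ?_, hE₁A⟩
    have e1 : μ (E₁ ∩ A) = μ A := by
      have := measure_inter_add_diff (μ := μ) E₁ hA.1
      rw [hE₁A, add_zero] at this
      rw [this, h]
    have e2 := measure_inter_add_diff (μ := μ) A hE₁m
    rw [Set.inter_comm A E₁, e1] at e2
    nth_rewrite 2 [← add_zero (μ A)] at e2
    exact (ENNReal.add_right_inj (measure_ne_top μ A)).mp e2
  · refine ⟨E₂, hE₂M, hE₂m, hAE₂, ?_⟩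
    have e1 : μ (A ∩ E₂) = μ A := by
      have := measure_inter_add_diff (μ := μ) A hE₂m
      rw [hAE₂, add_zero] at this
      exact this
    have e2 := measure_inter_add_diff (μ := μ) E₂ hA.1
    rw [Set.inter_comm E₂ A, e1, h] at e2
    nth_rewrite 2 [← add_zero (μ A)] at e2
    exact (ENNReal.add_right_inj (measure_ne_top μ A)).mp e2

end Aux

section Aux2
variable {S : Type*} [MeasurableSpace S] {μ : Measure S} {W : S → S → ℝ} (B : ℕ → Set S)

lemma approx_memZ [IsProbabilityMeasure μ]
    (hsum : ∀ᵐ p ∂(μ.prod μ), W p.1 p.2 + W p.2 p.1 = 1)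
    (hBd : ∀ n, IsDown μ W (B n))
    (hdense : ∀ A, IsDown μ W A → μ A ∈ closure (Set.range fun n => μ (B n)))
    {A : Set S} (hA : memZ μ W A) :
    ∃ E, MeasurableSet[MeasurableSpace.generateFrom (Set.range B)] E ∧
      MeasurableSet E ∧ μ (A \ E) = 0 ∧ μ (E \ A) = 0 := by
  obtain ⟨hAm, B₀, C, hB₀m, hCm, hBC, hBCd, h1, h2, h3⟩ := hA
  have hB₀A : ∀ x, x ∈ B₀ → x ∉ A := by
    intro x hx hxA
    have : x ∈ Aᶜ := hBC ▸ Set.mem_union_left _ hx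
    exact this hxA
  have hcompl : B₀ᶜ = A ∪ C := by
    ext x
    constructor
    · intro hx
      by_cases hxA : x ∈ A
      · exact Or.inl hxA
      · have : x ∈ B₀ ∪ C := hBC.symm ▸ hxA
        rcases this with h | h
        · exact absurd h hx
        · exact Or.inr h
    · rintro (h | h) hxB
      · exact hB₀A x hxB h
      · exact (Set.eq_empty_iff_forall_notMem.mp hBCd x) ⟨hxB, h⟩
  have hcompl2 : (B₀ ∪ A)ᶜ = C := by
    ext x
    constructor
    · intro hx
      have hxB : x ∉ B₀ := fun h => hx (Set.mem_union_left _ h)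
      have hxA : x ∉ A := fun h => hx (Set.mem_union_right _ h)
      have : x ∈ B₀ ∪ C := hBC.symm ▸ hxA
      rcases this with h | h
      · exact absurd h hxB
      · exact h
    · intro hxC hx
      rcases hx with h | h
      · exact (Set.eq_empty_iff_forall_notMem.mp hBCd x) ⟨h, hxC⟩
      · have : x ∈ Aᶜ := hBC ▸ Set.mem_union_right _ hxC
        exact this h
  have hd1 : IsDown μ W B₀ := by
    refine ⟨hB₀m, ?_⟩
    unfold KPrec
    rw [hcompl]
    filter_upwards [h1, h3] with p u v hb hac
    rcases hac with ha | hc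
    · exact u hb ha
    · exact v hb hc
  have hd2 : IsDown μ W (B₀ ∪ A) := by
    refine ⟨hB₀m.union hAm, ?_⟩
    unfold KPrec
    rw [hcompl2]
    filter_upwards [h3, h2] with p u v hba hc
    rcases hba with hb | ha
    · exact u hb hc
    · exact v ha hc
  obtain ⟨E₁, hE₁M, hE₁m, d11, d12⟩ := approx_down B hsum hBd hdense hd1
  obtain ⟨E₂, hE₂M, hE₂m, d21, d22⟩ := approx_down B hsum hBd hdense hd2
  refine ⟨E₂ \ E₁, hE₂M.diff hE₁M, hE₂m.diff hE₁m, ?_, ?_⟩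
  · refine measure_mono_null (t := ((B₀ ∪ A) \ E₂) ∪ (E₁ \ B₀)) ?_
      (measure_union_null d21 d12)
    rintro x ⟨hxA, hx⟩
    by_cases hx2 : x ∈ E₂
    · have hx1 : x ∈ E₁ := by
        by_contra h
        exact hx ⟨hx2, h⟩
      exact Or.inr ⟨hx1, fun hB => hB₀A x hB hxA⟩
    · exact Or.inl ⟨Or.inr hxA, hx2⟩
  · refine measure_mono_null (t := (E₂ \ (B₀ ∪ A)) ∪ (B₀ \ E₁)) ?_
      (measure_union_null d22 d11)
    rintro x ⟨⟨hxE₂, hxE₁⟩, hxA⟩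
    by_cases hxB : x ∈ B₀ ∪ A
    · rcases hxB with h | h
      · exact Or.inr ⟨h, hxE₁⟩
      · exact absurd h hxA
    · exact Or.inl ⟨hxE₂, hxB⟩

lemma approx_sigmaZ [IsProbabilityMeasure μ]
    (hsum : ∀ᵐ p ∂(μ.prod μ), W p.1 p.2 + W p.2 p.1 = 1)
    (hBd : ∀ n, IsDown μ W (B n))
    (hdense : ∀ A, IsDown μ W A → μ A ∈ closure (Set.range fun n => μ (B n)))
    {A : Set S}
    (hA : MeasurableSet[MeasurableSpace.generateFrom {A : Set S | memZ μ W A}] A) :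
    ∃ E, MeasurableSet[MeasurableSpace.generateFrom (Set.range B)] E ∧
      MeasurableSet E ∧ μ (A \ E) = 0 ∧ μ (E \ A) = 0 := by
  refine MeasurableSpace.generateFrom_induction {A : Set S | memZ μ W A}
    (fun s _ => ∃ E, MeasurableSet[MeasurableSpace.generateFrom (Set.range B)] E ∧
      MeasurableSet E ∧ μ (s \ E) = 0 ∧ μ (E \ s) = 0)
    ?_ ?_ ?_ ?_ A hA
  · intro t ht _
    exact approx_memZ B hsum hBd hdense ht
  · exact ⟨∅, @MeasurableSet.empty _ (MeasurableSpace.generateFrom (Set.range B)), MeasurableSet.empty, by simp, by simp⟩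
  · rintro t _ ⟨E, hM, hm, hd1, hd2⟩
    refine ⟨Eᶜ, hM.compl, hm.compl, ?_, ?_⟩
    · refine measure_mono_null ?_ hd2
      rintro x ⟨hx1, hx2⟩
      exact ⟨not_not.mp hx2, hx1⟩
    · refine measure_mono_null ?_ hd1
      rintro x ⟨hx1, hx2⟩
      exact ⟨not_not.mp hx2, hx1⟩
  · rintro s _ ih
    choose E hM hm hd1 hd2 using ih
    refine ⟨⋃ n, E n, MeasurableSet.iUnion hM, MeasurableSet.iUnion hm, ?_, ?_⟩
    · refine measure_mono_null ?_ (measure_iUnion_null fun n => hd1 n)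
      rintro x ⟨hx1, hx2⟩
      obtain ⟨n, hn⟩ := Set.mem_iUnion.mp hx1
      refine Set.mem_iUnion.mpr ⟨n, hn, fun h => hx2 (Set.mem_iUnion.mpr ⟨n, h⟩)⟩
    · refine measure_mono_null ?_ (measure_iUnion_null fun n => hd2 n)
      rintro x ⟨hx1, hx2⟩
      obtain ⟨n, hn⟩ := Set.mem_iUnion.mp hx1
      refine Set.mem_iUnion.mpr ⟨n, hn, fun h => hx2 (Set.mem_iUnion.mpr ⟨n, h⟩)⟩

lemma down_memZ {B₀ : Set S} (h : IsDown μ W B₀) : memZ μ W B₀ :=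
  ⟨h.1, ∅, B₀ᶜ, MeasurableSet.empty, h.1.compl, Set.empty_union _,
    Set.empty_inter _, kprec_empty _, h.2, kprec_empty _⟩

lemma cell_atom [IsProbabilityMeasure μ]
    (hsum : ∀ᵐ p ∂(μ.prod μ), W p.1 p.2 + W p.2 p.1 = 1)
    (hBd : ∀ n, IsDown μ W (B n))
    (hdense : ∀ A, IsDown μ W A → μ A ∈ closure (Set.range fun n => μ (B n)))
    {x₀ : S} (hpos : 0 < μ {y | ∀ n, y ∈ B n ↔ x₀ ∈ B n}) :
    IsAtomOf (MeasurableSpace.generateFrom {A : Set S | memZ μ W A}) μ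
      {y | ∀ n, y ∈ B n ↔ x₀ ∈ B n} := by
  classical
  set P : Set S := {y | ∀ n, y ∈ B n ↔ x₀ ∈ B n} with hP
  have hMle : MeasurableSpace.generateFrom (Set.range B) ≤
      MeasurableSpace.generateFrom {A : Set S | memZ μ W A} := by
    refine MeasurableSpace.generateFrom_le ?_
    rintro t ⟨n, rfl⟩
    exact measurableSet_generateFrom (down_memZ (hBd n))
  have hPM : MeasurableSet[MeasurableSpace.generateFrom (Set.range B)] P := by
    have hPeq : P = ⋂ n, if x₀ ∈ B n then B n else (B n)ᶜ := by
      ext y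
      simp only [hP, Set.mem_setOf_eq, Set.mem_iInter]
      refine forall_congr' fun n => ?_
      split_ifs with hx
      · simp [hx]
      · simp [hx]
    rw [hPeq]
    refine MeasurableSet.iInter fun n => ?_
    split_ifs with hx
    · exact measurableSet_generateFrom (Set.mem_range_self n)
    · exact (measurableSet_generateFrom (Set.mem_range_self n)).compl
  refine ⟨hMle _ hPM, hpos, ?_⟩
  rintro ⟨A', hA'm, hA'sub, hA'pos, hA'lt⟩
  obtain ⟨E, hEM, hEm, hd1, hd2⟩ := approx_sigmaZ B hsum hBd hdense hA'm
  by_cases hEP : (E ∩ P).Nonempty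
  · obtain ⟨y₀, hy₀E, hy₀P⟩ := hEP
    have hPE : P ⊆ E := by
      intro z hz
      have : z ∈ E ↔ y₀ ∈ E := saturated B hEM fun n => (hz n).trans (hy₀P n).symm
      exact this.mpr hy₀E
    have hle : μ P ≤ μ A' := by
      calc μ P ≤ μ E := measure_mono hPE
      _ ≤ μ (E \ A') + μ A' := by
          refine le_trans (measure_mono ?_) (measure_union_le _ _)
          intro x hx
          by_cases h : x ∈ A'
          · exact Or.inr h
          · exact Or.inl ⟨hx, h⟩
      _ = μ A' := by rw [hd2, zero_add]
    exact absurd hA'lt (not_lt.mpr hle)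
  · have hle : μ A' ≤ μ (A' \ E) := by
      refine measure_mono fun x hx => ⟨hx, fun hxE => ?_⟩
      exact hEP ⟨x, hxE, hA'sub hx⟩
    rw [hd1] at hle
    exact absurd hA'pos (not_lt.mpr hle)

end Aux2

/-- On the non-atomic part `I` of `(S, σ(Z), μ)`, the cyclic integral
`∫_{I×I×I} W(x,y) W(y,z) W(z,x) dμ³` vanishes; in particular, if `μ(I) > 0`, the
restricted kernel `W|_I` (with the normalized measure) satisfies `t(C₃, W|_I) = 0`. -/
theorem stmt17 {S : Type*} [MeasurableSpace S] (μ : Measure S) [IsProbabilityMeasure μ]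
    (W : S → S → ℝ) (hW : IsTournamentKernel μ W) (I : Set S)
    (hI : I = nonAtomicPart (MeasurableSpace.generateFrom {B : Set S | memZ μ W B}) μ) :
    (∫ x in I, ∫ y in I, ∫ z in I, W x y * W y z * W z x ∂μ ∂μ ∂μ) = 0 ∧
    (0 < μ I →
      (∫ x, ∫ y, ∫ z, W x y * W y z * W z x
        ∂((μ I)⁻¹ • μ.restrict I) ∂((μ I)⁻¹ • μ.restrict I)
          ∂((μ I)⁻¹ • μ.restrict I)) = 0) := by
  classical
  obtain ⟨hWm, hW01, hsum⟩ := hW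
  obtain ⟨B, hBd, hBdense⟩ := exists_dense_family μ W
  set ν : Measure S := μ.restrict I with hν
  have hcell_null : ∀ x ∈ I, μ {y | ∀ n, y ∈ B n ↔ x ∈ B n} = 0 := by
    intro x hx
    by_contra h
    have hpos : 0 < μ {y | ∀ n, y ∈ B n ↔ x ∈ B n} := pos_iff_ne_zero.mpr h
    have hatom := cell_atom B hsum hBd hBdense hpos
    have hmem : x ∈ ⋃₀ {A : Set S | IsAtomOf
        (MeasurableSpace.generateFrom {B : Set S | memZ μ W B}) μ A} :=
      ⟨_, hatom, fun n => Iff.rfl⟩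
    rw [hI] at hx
    exact hx hmem
  set Cs : Set (S × S) := {p | ∀ n, p.2 ∈ B n ↔ p.1 ∈ B n} with hCsdef
  have hCsm : MeasurableSet Cs := by
    have hCseq : Cs = ⋂ n, ((B n ×ˢ B n) ∪ ((B n)ᶜ ×ˢ (B n)ᶜ)) := by
      ext p
      simp only [hCsdef, Set.mem_setOf_eq, Set.mem_iInter, Set.mem_union, Set.mem_prod,
        Set.mem_compl_iff]
      refine forall_congr' fun n => ?_
      tauto
    rw [hCseq]
    exact MeasurableSet.iInter fun n =>
      (((hBd n).1.prod (hBd n).1).union (((hBd n).1.compl).prod ((hBd n).1.compl)))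
  have hsec : ∀ x : S, Prod.mk x ⁻¹' Cs = {y | ∀ n, y ∈ B n ↔ x ∈ B n} := fun x => rfl
  have hNm : MeasurableSet {x : S | μ {y | ∀ n, y ∈ B n ↔ x ∈ B n} ≠ 0} := by
    have hg : Measurable fun x : S => μ (Prod.mk x ⁻¹' Cs) :=
      measurable_measure_prodMk_left hCsm
    have : {x : S | μ {y | ∀ n, y ∈ B n ↔ x ∈ B n} ≠ 0} =
        (fun x : S => μ (Prod.mk x ⁻¹' Cs)) ⁻¹' ({0}ᶜ) := by
      ext x
      simp [hsec]
    rw [this]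
    exact hg (measurableSet_singleton 0).compl
  have hνN : ν {x : S | μ {y | ∀ n, y ∈ B n ↔ x ∈ B n} ≠ 0} = 0 := by
    rw [hν, Measure.restrict_apply hNm]
    have he : {x : S | μ {y | ∀ n, y ∈ B n ↔ x ∈ B n} ≠ 0} ∩ I = ∅ := by
      apply Set.eq_empty_iff_forall_notMem.mpr
      rintro x ⟨hx1, hx2⟩
      exact hx1 (hcell_null x hx2)
    rw [he, measure_empty]
  have hνcell : ∀ᵐ x ∂ν, ν {y | ∀ n, y ∈ B n ↔ x ∈ B n} = 0 := by
    have h0 : ∀ᵐ x ∂ν, μ {y | ∀ n, y ∈ B n ↔ x ∈ B n} = 0 := by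
      rw [ae_iff]
      simpa using hνN
    filter_upwards [h0] with x hx
    refine le_antisymm ?_ zero_le
    calc ν {y | ∀ n, y ∈ B n ↔ x ∈ B n} ≤ μ {y | ∀ n, y ∈ B n ↔ x ∈ B n} :=
          Measure.le_iff'.mp Measure.restrict_le_self _
    _ = 0 := hx
  have hCν : (ν.prod ν) Cs = 0 := by
    rw [Measure.prod_apply hCsm,
      lintegral_eq_zero_iff (measurable_measure_prodMk_left hCsm)]
    filter_upwards [hνcell] with x hx
    simpa [hsec x] using hx
  have hle : ae (ν.prod ν) ≤ ae (μ.prod μ) := by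
    have h1 : ν ≪ μ := Measure.absolutelyContinuous_of_le Measure.restrict_le_self
    exact (h1.prod h1).ae_le
  have hQ1 : ∀ n : ℕ, ∀ᵐ p ∂(ν.prod ν),
      p.1 ∈ B n → p.2 ∉ B n → W p.1 p.2 = 1 ∧ W p.2 p.1 = 0 := by
    intro n
    refine Filter.Eventually.filter_mono hle ?_
    filter_upwards [(hBd n).2, hsum] with p h1 h2 hp1 hp2
    have e : W p.1 p.2 = 1 := h1 hp1 hp2
    exact ⟨e, by linarith⟩
  have hQ2 : ∀ n : ℕ, ∀ᵐ p ∂(ν.prod ν),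
      p.2 ∈ B n → p.1 ∉ B n → W p.2 p.1 = 1 ∧ W p.1 p.2 = 0 := by
    intro n
    refine Filter.Eventually.filter_mono hle ?_
    filter_upwards [kprec_rev (hBd n).2, hsum] with p h1 h2 hp1 hp2
    have e : W p.2 p.1 = 1 := h1 hp1 hp2
    exact ⟨e, by linarith⟩
  have hQ3 : ∀ n m : ℕ, ∀ᵐ p ∂(ν.prod ν),
      ¬(p.1 ∈ B n ∧ p.2 ∉ B n ∧ p.2 ∈ B m ∧ p.1 ∉ B m) := by
    intro n m
    refine Filter.Eventually.filter_mono hle ?_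
    have h0 := rect_null hsum (hBd n) (hBd m)
    filter_upwards [measure_eq_zero_iff_ae_notMem.mp h0] with p hp hcon
    exact hp ⟨⟨hcon.1, hcon.2.2.2⟩, hcon.2.2.1, hcon.2.1⟩
  have hQ4 : ∀ᵐ p ∂(ν.prod ν), ∃ n, ¬(p.2 ∈ B n ↔ p.1 ∈ B n) := by
    filter_upwards [measure_eq_zero_iff_ae_notMem.mp hCν] with p hp
    by_contra h
    push_neg at h
    exact hp fun n => h n
  have hQ : ∀ᵐ p ∂(ν.prod ν),
      (∀ n, p.1 ∈ B n → p.2 ∉ B n → W p.1 p.2 = 1 ∧ W p.2 p.1 = 0) ∧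
      (∀ n, p.2 ∈ B n → p.1 ∉ B n → W p.2 p.1 = 1 ∧ W p.1 p.2 = 0) ∧
      (∀ n m, ¬(p.1 ∈ B n ∧ p.2 ∉ B n ∧ p.2 ∈ B m ∧ p.1 ∉ B m)) ∧
      (∃ n, ¬(p.2 ∈ B n ↔ p.1 ∈ B n)) := by
    have a1 := ae_all_iff.mpr hQ1
    have a2 := ae_all_iff.mpr hQ2
    have a3 := ae_all_iff.mpr fun n => ae_all_iff.mpr (hQ3 n)
    filter_upwards [a1, a2, a3, hQ4] with p h1 h2 h3 h4
    exact ⟨h1, h2, h3, h4⟩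
  set Q : S → S → Prop := fun x y =>
      (∀ n, x ∈ B n → y ∉ B n → W x y = 1 ∧ W y x = 0) ∧
      (∀ n, y ∈ B n → x ∉ B n → W y x = 1 ∧ W x y = 0) ∧
      (∀ n m, ¬(x ∈ B n ∧ y ∉ B n ∧ y ∈ B m ∧ x ∉ B m)) ∧
      (∃ n, ¬(y ∈ B n ↔ x ∈ B n)) with hQdef
  have cur : ∀ᵐ x ∂ν, ∀ᵐ y ∂ν, Q x y := Measure.ae_ae_of_ae_prod hQ
  have key : ∀ x y z : S, Q x y → Q y z → Q x z → W x y * W y z * W z x = 0 := by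
    intro x y z qxy qyz qxz
    obtain ⟨n, hn⟩ := qxy.2.2.2
    by_cases hyn : y ∈ B n
    · have hxn : x ∉ B n := fun h => hn (iff_of_true hyn h)
      rw [(qxy.2.1 n hyn hxn).2]
      ring
    · have hxn : x ∈ B n := by
        by_contra h
        exact hn (iff_of_false hyn h)
      obtain ⟨m, hm⟩ := qyz.2.2.2
      by_cases hzm : z ∈ B m
      · have hym : y ∉ B m := fun h => hm (iff_of_true hzm h)
        rw [(qyz.2.1 m hzm hym).2]
        ring
      · have hym : y ∈ B m := by
          by_contra h
          exact hm (iff_of_false hzm h)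
        have hxm : x ∈ B m := by
          by_contra h
          exact qxy.2.2.1 n m ⟨hxn, hyn, hym, h⟩
        rw [(qxz.1 m hxm hzm).2]
        ring
  have htr : ∀ᵐ x ∂ν, ∀ᵐ y ∂ν, ∀ᵐ z ∂ν, W x y * W y z * W z x = 0 := by
    filter_upwards [cur] with x hx
    filter_upwards [hx, cur] with y hxy hy
    filter_upwards [hy, hx] with z hyz hxz
    exact key x y z hxy hyz hxz
  have part1 : (∫ x in I, ∫ y in I, ∫ z in I, W x y * W y z * W z x ∂μ ∂μ ∂μ) = 0 := by
    have h1 : ∀ᵐ x ∂ν, (∫ y in I, ∫ z in I, W x y * W y z * W z x ∂μ ∂μ) = 0 := by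
      filter_upwards [htr] with x hx
      have h2 : ∀ᵐ y ∂ν, (∫ z in I, W x y * W y z * W z x ∂μ) = 0 := by
        filter_upwards [hx] with y hy
        exact integral_eq_zero_of_ae (by filter_upwards [hy] with z hz using hz)
      exact integral_eq_zero_of_ae (by filter_upwards [h2] with y hy using hy)
    exact integral_eq_zero_of_ae (by filter_upwards [h1] with x hx using hx)
  refine ⟨part1, fun _ => ?_⟩
  simp only [integral_smul_measure, integral_smul]
  rw [part1]
  simp
end

section
/- Let W be a tournament kernel on a probability space (S, μ). Then there exists a countable (possibly empty) family {S_i}_{i∈Q} of pairwise disjoint measurable subsets of S with μ(S_i) > 0 for each i ∈ Q such that, with I = S ∖ ⋃_{i∈Q} S_i: (1) for each i ∈ Q, the restriction W|_{S_i}, regarded as a tournament kernel on (S_i, μ(·∩S_i)/μ(S_i)), is irreducible; (2) for any distinct i, j ∈ Q, either S_i ≺ S_j or S_j ≺ S_i, and this relation linearly orders Q; (3) for every measurable A ⊆ I with μ(A) > 0, the restriction W|_A, regarded as a tournament kernel on (A, μ(·∩A)/μ(A)), is transitive; (4) for μ-a.e. x ∈ I and every i ∈ Q, either W(x,y) = 1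 for μ-a.e. y ∈ S_i or W(x,y) = 0 for μ-a.e. y ∈ S_i. -/
open MeasureTheory

section Base
variable {S : Type*} [MeasurableSpace S] (μ : Measure S) (W : S → S → ℝ)

/-- initial segment (lower set): W = 1 a.e. from B to its complement -/
def IsInitSeg (B : Set S) : Prop :=
  MeasurableSet B ∧ ∀ᵐ p ∂(μ.prod μ), p.1 ∈ B → p.2 ∉ B → W p.1 p.2 = 1

variable {μ W}

lemma ae_swap_prod [SFinite μ] {P : S × S → Prop}
    (h : ∀ᵐ p ∂(μ.prod μ), P p) : ∀ᵐ p ∂(μ.prod μ), P p.swap := by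
  have h' : ∀ᵐ p ∂(Measure.map Prod.swap (μ.prod μ)), P p := by
    rwa [Measure.prod_swap]
  exact ae_of_ae_map measurable_swap.aemeasurable h'

lemma exists_mem_of_prod_pos {ν : Measure (S × S)} {R : Set (S × S)} {Q : S × S → Prop}
    (hR : 0 < ν R) (hQ : ∀ᵐ p ∂ν, Q p) : ∃ p ∈ R, Q p := by
  by_contra hcon
  push_neg at hcon
  have hsub : R ⊆ {p | ¬ Q p} := fun p hp => hcon p hp
  exact absurd (measure_mono_null hsub (ae_iff.1 hQ)) hR.ne'

lemma initSeg_empty : IsInitSeg μ W (∅ : Set S) :=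
  ⟨MeasurableSet.empty, Filter.Eventually.of_forall fun p h => h.elim⟩

lemma initSeg_univ : IsInitSeg μ W (Set.univ : Set S) :=
  ⟨MeasurableSet.univ, Filter.Eventually.of_forall fun _ _ h => (h trivial).elim⟩

lemma initSeg_iUnion {ι : Type*} [Countable ι] {B : ι → Set S}
    (hB : ∀ i, IsInitSeg μ W (B i)) : IsInitSeg μ W (⋃ i, B i) := by
  refine ⟨MeasurableSet.iUnion fun i => (hB i).1, ?_⟩
  have h := ae_all_iff.2 fun i => (hB i).2
  filter_upwards [h] with p hp h1 h2
  obtain ⟨i, hi⟩ := Set.mem_iUnion.1 h1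
  exact hp i hi (fun hmem => h2 (Set.mem_iUnion.2 ⟨i, hmem⟩))

lemma initSeg_iInter {ι : Type*} [Countable ι] [Nonempty ι] {B : ι → Set S}
    (hB : ∀ i, IsInitSeg μ W (B i)) : IsInitSeg μ W (⋂ i, B i) := by
  refine ⟨MeasurableSet.iInter fun i => (hB i).1, ?_⟩
  have h := ae_all_iff.2 fun i => (hB i).2
  filter_upwards [h] with p hp h1 h2
  rw [Set.mem_iInter] at h2
  push_neg at h2
  obtain ⟨i, hi⟩ := h2
  exact hp i (Set.mem_iInter.1 h1 i) hi

/-- two initial segments: the one of smaller measure is contained in the other mod null -/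
lemma initSeg_mono [IsProbabilityMeasure μ] (hW : IsTournamentKernel μ W)
    {B C : Set S} (hB : IsInitSeg μ W B) (hC : IsInitSeg μ W C)
    (hle : μ B ≤ μ C) : μ (B \ C) = 0 := by
  have key : μ (B \ C) = 0 ∨ μ (C \ B) = 0 := by
    by_contra hcon
    push_neg at hcon
    obtain ⟨h1, h2⟩ := hcon
    have hCswap : ∀ᵐ p ∂(μ.prod μ), p.2 ∈ C → p.1 ∉ C → W p.2 p.1 = 1 :=
      ae_swap_prod (P := fun p => p.1 ∈ C → p.2 ∉ C → W p.1 p.2 = 1) hC.2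
    have hpos : 0 < (μ.prod μ) ((B \ C) ×ˢ (C \ B)) := by
      rw [Measure.prod_prod]
      exact ENNReal.mul_pos h1 h2
    have hae : ∀ᵐ p ∂(μ.prod μ), (p.1 ∈ B → p.2 ∉ B → W p.1 p.2 = 1) ∧
        (p.2 ∈ C → p.1 ∉ C → W p.2 p.1 = 1) ∧ W p.1 p.2 + W p.2 p.1 = 1 := by
      filter_upwards [hB.2, hCswap, hW.2.2] with p u v w using ⟨u, v, w⟩
    obtain ⟨p, hp1, hp2, hp3, hp4⟩ := exists_mem_of_prod_pos hpos hae
    obtain ⟨hpB, hpC⟩ := Set.mem_prod.1 hp1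
    have e1 : W p.1 p.2 = 1 := hp2 hpB.1 (fun h => hpC.2 h)
    have e2 : W p.2 p.1 = 1 := hp3 hpC.1 (fun h => hpB.2 h)
    rw [e1, e2] at hp4; norm_num at hp4
  rcases key with h | h
  · exact h
  · have h1 : μ C = μ (B ∩ C) := by
      calc μ C = μ (C \ B) + μ (C ∩ B) := (measure_diff_add_inter C hB.1).symm
      _ = μ (B ∩ C) := by rw [h, zero_add, Set.inter_comm]
    have h2 : μ B = μ (B \ C) + μ (B ∩ C) := (measure_diff_add_inter B hC.1).symm
    have h3 : μ (B \ C) + μ (B ∩ C) ≤ 0 + μ (B ∩ C) := by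
      rw [zero_add]; rw [← h2]; exact le_trans hle h1.le
    have hfin : μ (B ∩ C) ≠ ⊤ := (measure_lt_top μ _).ne
    have := (ENNReal.add_le_add_iff_right hfin).1 h3
    exact le_antisymm this zero_le

end Base

section Chunk2
variable {S : Type*} [MeasurableSpace S] (μ : Measure S) (W : S → S → ℝ)

/-- the set of measures of initial segments -/
def segMeasures : Set ℝ := (fun B => (μ B).toReal) '' {B : Set S | IsInitSeg μ W B}

variable {μ W}

lemma segMeasures_subset [IsProbabilityMeasure μ] : segMeasures μ W ⊆ Set.Icc 0 1 := by
  rintro v ⟨B, _, rfl⟩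
  exact ⟨ENNReal.toReal_nonneg, by
    have : μ B ≤ 1 := prob_le_one
    simpa using ENNReal.toReal_mono ENNReal.one_ne_top this⟩

lemma zero_mem_segMeasures : (0 : ℝ) ∈ segMeasures μ W :=
  ⟨∅, initSeg_empty, by simp⟩

lemma one_mem_segMeasures [IsProbabilityMeasure μ] : (1 : ℝ) ∈ segMeasures μ W :=
  ⟨Set.univ, initSeg_univ, by simp⟩

lemma initSeg_mono' [IsProbabilityMeasure μ] (hW : IsTournamentKernel μ W)
    {B C : Set S} (hB : IsInitSeg μ W B) (hC : IsInitSeg μ W C)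
    (hle : (μ B).toReal ≤ (μ C).toReal) : μ (B \ C) = 0 :=
  initSeg_mono hW hB hC ((ENNReal.toReal_le_toReal (measure_ne_top μ B)
    (measure_ne_top μ C)).1 hle)

lemma measure_eq_ofReal_toReal (B : Set S) [IsFiniteMeasure μ] :
    μ B = ENNReal.ofReal ((μ B).toReal) := (ENNReal.ofReal_toReal (measure_ne_top μ B)).symm

lemma sSup_mem_segMeasures [IsProbabilityMeasure μ] (hW : IsTournamentKernel μ W)
    {T : Set ℝ} (hT : T ⊆ segMeasures μ W) (hne : T.Nonempty) :
    sSup T ∈ segMeasures μ W := by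
  have hbdd : BddAbove T := ⟨1, fun v hv => (segMeasures_subset (hT hv)).2⟩
  obtain ⟨u, hu_mono, hu_tend, hu_mem⟩ := exists_seq_tendsto_sSup hne hbdd
  choose B hB hBval using fun n => hT (hu_mem n)
  have hBm : ∀ n, IsInitSeg μ W (B n) := hB
  have hBval' : ∀ n, (μ (B n)).toReal = u n := hBval
  set Binf := ⋃ n, B n with hBinf
  have hInit : IsInitSeg μ W Binf := initSeg_iUnion hBm
  have hdiff : ∀ k n, k ≤ n → μ (B k \ B n) = 0 := fun k n hkn =>
    initSeg_mono' hW (hBm k) (hBm n) (by rw [hBval' k, hBval' n]; exact hu_mono hkn)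
  set U : ℕ → Set S := fun n => ⋃ k ∈ Finset.range (n+1), B k with hU
  have hUmono : Monotone U := by
    intro a b hab x hx
    obtain ⟨k, hk, hxk⟩ := Set.mem_iUnion₂.1 hx
    refine Set.mem_iUnion₂.2 ⟨k, ?_, hxk⟩
    simp only [Finset.mem_range] at hk ⊢
    omega
  have hUeq : ∀ n, μ (U n) = μ (B n) := by
    intro n
    refine le_antisymm ?_ (measure_mono ?_)
    · have hsub : U n ⊆ B n ∪ ⋃ k ∈ Finset.range (n+1), (B k \ B n) := by
        intro x hx
        obtain ⟨k, hk, hxk⟩ := Set.mem_iUnion₂.1 hx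
        by_cases hxn : x ∈ B n
        · exact Or.inl hxn
        · exact Or.inr (Set.mem_iUnion₂.2 ⟨k, hk, hxk, hxn⟩)
      refine le_trans (measure_mono hsub) ?_
      refine le_trans (measure_union_le _ _) ?_
      have : μ (⋃ k ∈ Finset.range (n+1), (B k \ B n)) = 0 := by
        refine measure_biUnion_null_iff ?_ |>.2 ?_
        · exact (Finset.range (n+1) : Finset ℕ).countable_toSet
        · intro k hk
          have hk' : k < n + 1 := Finset.mem_range.mp hk
          exact hdiff k n (by omega)
      rw [this, add_zero]
    · exact Set.subset_biUnion_of_mem (Finset.self_mem_range_succ _)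
  have htend : Filter.Tendsto (fun n => μ (B n)) Filter.atTop (nhds (μ Binf)) := by
    have h1 := tendsto_measure_iUnion_atTop (μ := μ) hUmono
    have h2 : ⋃ n, U n = Binf := by
      apply Set.Subset.antisymm
      · exact Set.iUnion_subset fun n => Set.iUnion₂_subset fun k _ => Set.subset_iUnion B k
      · exact Set.iUnion_subset fun n => Set.subset_iUnion_of_subset n
          (Set.subset_biUnion_of_mem (Finset.self_mem_range_succ _))
    rw [h2] at h1
    have : (⇑μ ∘ U) = fun n => μ (B n) := funext fun n => hUeq n
    rwa [this] at h1
  have htend2 : Filter.Tendsto (fun n => μ (B n)) Filter.atTop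
      (nhds (ENNReal.ofReal (sSup T))) := by
    have h3 : (fun n => μ (B n)) = fun n => ENNReal.ofReal (u n) := by
      funext n
      rw [measure_eq_ofReal_toReal (B n), hBval' n]
    rw [h3]
    exact (ENNReal.continuous_ofReal.tendsto _).comp hu_tend
  have hkey : μ Binf = ENNReal.ofReal (sSup T) := tendsto_nhds_unique htend htend2
  refine ⟨Binf, hInit, ?_⟩
  show (μ Binf).toReal = _
  rw [hkey, ENNReal.toReal_ofReal]
  obtain ⟨v, hv⟩ := hne
  exact le_trans (segMeasures_subset (hT hv)).1 (le_csSup hbdd hv)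

lemma sInf_mem_segMeasures [IsProbabilityMeasure μ] (hW : IsTournamentKernel μ W)
    {T : Set ℝ} (hT : T ⊆ segMeasures μ W) (hne : T.Nonempty) :
    sInf T ∈ segMeasures μ W := by
  have hbdd : BddBelow T := ⟨0, fun v hv => (segMeasures_subset (hT hv)).1⟩
  obtain ⟨u, hu_mono, hu_tend, hu_mem⟩ := exists_seq_tendsto_sInf hne hbdd
  choose B hB hBval using fun n => hT (hu_mem n)
  have hBm : ∀ n, IsInitSeg μ W (B n) := hB
  have hBval' : ∀ n, (μ (B n)).toReal = u n := hBval
  set Binf := ⋂ n, B n with hBinf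
  have hInit : IsInitSeg μ W Binf := initSeg_iInter hBm
  have hdiff : ∀ k n, k ≤ n → μ (B n \ B k) = 0 := fun k n hkn =>
    initSeg_mono' hW (hBm n) (hBm k) (by rw [hBval' k, hBval' n]; exact hu_mono hkn)
  set U : ℕ → Set S := fun n => ⋂ k ∈ Finset.range (n+1), B k with hU
  have hUanti : Antitone U := by
    intro a b hab x hx
    refine Set.mem_iInter₂.2 fun k hk => Set.mem_iInter₂.1 hx k ?_
    simp only [Finset.mem_range] at hk ⊢
    omega
  have hUeq : ∀ n, μ (U n) = μ (B n) := by
    intro n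
    refine le_antisymm (measure_mono ?_) ?_
    · exact Set.biInter_subset_of_mem (Finset.self_mem_range_succ _)
    · have hsub : B n ⊆ U n ∪ ⋃ k ∈ Finset.range (n+1), (B n \ B k) := by
        intro x hx
        by_cases hxU : x ∈ U n
        · exact Or.inl hxU
        · have : ¬ ∀ k ∈ Finset.range (n+1), x ∈ B k := fun h => hxU (Set.mem_iInter₂.2 h)
          push_neg at this
          obtain ⟨k, hk, hxk⟩ := this
          exact Or.inr (Set.mem_iUnion₂.2 ⟨k, hk, hx, hxk⟩)
      refine le_trans (measure_mono hsub) ?_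
      refine le_trans (measure_union_le _ _) ?_
      have : μ (⋃ k ∈ Finset.range (n+1), (B n \ B k)) = 0 := by
        refine measure_biUnion_null_iff ?_ |>.2 ?_
        · exact (Finset.range (n+1) : Finset ℕ).countable_toSet
        · intro k hk
          have hk' : k < n + 1 := Finset.mem_range.mp hk
          exact hdiff k n (by omega)
      rw [this, add_zero]
  have htend : Filter.Tendsto (fun n => μ (B n)) Filter.atTop (nhds (μ Binf)) := by
    have h1 := tendsto_measure_iInter_atTop (μ := μ)
      (fun n => ((Finset.range (n+1)).measurableSet_biInter (fun k _ => (hBm k).1)).nullMeasurableSet)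
      hUanti ⟨0, measure_ne_top μ _⟩
    have h2 : ⋂ n, U n = Binf := by
      apply Set.Subset.antisymm
      · intro x hx
        refine Set.mem_iInter.2 fun n => ?_
        have := Set.mem_iInter.1 hx n
        exact Set.biInter_subset_of_mem (Finset.self_mem_range_succ n) this
      · intro x hx
        refine Set.mem_iInter.2 fun n => Set.mem_iInter₂.2 fun k _ => Set.mem_iInter.1 hx k
    rw [h2] at h1
    have : (⇑μ ∘ U) = fun n => μ (B n) := funext fun n => hUeq n
    rwa [this] at h1
  have htend2 : Filter.Tendsto (fun n => μ (B n)) Filter.atTop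
      (nhds (ENNReal.ofReal (sInf T))) := by
    have h3 : (fun n => μ (B n)) = fun n => ENNReal.ofReal (u n) := by
      funext n
      rw [measure_eq_ofReal_toReal (B n), hBval' n]
    rw [h3]
    exact (ENNReal.continuous_ofReal.tendsto _).comp hu_tend
  have hkey : μ Binf = ENNReal.ofReal (sInf T) := tendsto_nhds_unique htend htend2
  refine ⟨Binf, hInit, ?_⟩
  show (μ Binf).toReal = _
  rw [hkey, ENNReal.toReal_ofReal]
  exact le_csInf hne (fun w hw => (segMeasures_subset (hT hw)).1)

end Chunk2

section Chunk3
-- abstract version: V ⊆ Icc 0 1, 0,1 ∈ V, closed under sSup of nonempty subsets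
variable {V : Set ℝ} (hV01 : V ⊆ Set.Icc 0 1) (h0 : (0:ℝ) ∈ V) (h1 : (1:ℝ) ∈ V)
    (hsup : ∀ T ⊆ V, T.Nonempty → sSup T ∈ V)

include hV01 h0 h1 hsup in
lemma exists_skeleton : ∃ D : Set ℝ, D.Countable ∧ D ⊆ V ∧ (0:ℝ) ∈ D ∧ (1:ℝ) ∈ D ∧
    ∀ v ∈ V, ∀ ε > 0, ∃ d ∈ D, v - ε < d ∧ d ≤ v := by
  classical
  have hbddV : BddAbove V := ⟨1, fun x hx => (hV01 hx).2⟩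
  set D0 : Set ℝ := Set.range (fun q : ℚ => sSup (V ∩ Set.Iic (q:ℝ))) with hD0
  set Viso : Set ℝ := {v ∈ V | ∃ w, w < v ∧ V ∩ Set.Ioo w v = ∅} with hViso
  have hD0V : D0 ⊆ V := by
    rintro v ⟨q, rfl⟩
    show sSup (V ∩ Set.Iic (q:ℝ)) ∈ V
    by_cases hne : (V ∩ Set.Iic (q:ℝ)).Nonempty
    · exact hsup _ Set.inter_subset_left hne
    · rw [Set.not_nonempty_iff_eq_empty.1 hne, Real.sSup_empty]; exact h0
  have hVisoV : Viso ⊆ V := fun v hv => hv.1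
  have hsup_pt : ∀ v ∈ V, ∀ q : ℚ, v ≤ (q:ℝ) → (∀ w ∈ V, w ≤ (q:ℝ) → w ≤ v) →
      sSup (V ∩ Set.Iic (q:ℝ)) = v := by
    intro v hv q hq hub
    apply le_antisymm
    · exact csSup_le ⟨v, hv, hq⟩ (fun w hw => hub w hw.1 hw.2)
    · exact le_csSup (hbddV.mono Set.inter_subset_left) ⟨hv, hq⟩
  -- countability of Viso
  have hVisoC : Viso.Countable := by
    have hchoice : ∀ v : ↥Viso, ∃ q : ℚ, ∃ w, w < (v:ℝ) ∧ V ∩ Set.Ioo w (v:ℝ) = ∅ ∧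
        w < (q:ℝ) ∧ (q:ℝ) < (v:ℝ) := by
      rintro ⟨v, hv, w, hw, hempty⟩
      obtain ⟨q, hq1, hq2⟩ := exists_rat_btwn hw
      exact ⟨q, w, hw, hempty, hq1, hq2⟩
    choose f w hwlt hwempty hq1 hq2 using hchoice
    have key : ∀ v v' : ↥Viso, f v = f v' → (v:ℝ) < (v':ℝ) → False := by
      intro v v' hff hlt
      have hv_mem : (v:ℝ) ∈ V ∩ Set.Ioo (w v') (v':ℝ) := by
        refine ⟨v.2.1, ?_, hlt⟩
        calc w v' < (f v' : ℝ) := hq1 v'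
        _ = (f v : ℝ) := by rw [hff]
        _ < (v:ℝ) := hq2 v
      rw [hwempty v'] at hv_mem
      exact hv_mem
    have hfinj : Function.Injective f := by
      intro v v' hff
      rcases lt_trichotomy (v:ℝ) (v':ℝ) with h | h | h
      · exact (key v v' hff h).elim
      · exact Subtype.ext h
      · exact (key v' v hff.symm h).elim
    have : Countable ↥Viso := Function.Injective.countable hfinj
    exact Set.countable_coe_iff.1 this
  refine ⟨D0 ∪ Viso, (Set.countable_range _).union hVisoC, Set.union_subset hD0V hVisoV, ?_, ?_, ?_⟩
  · left
    exact ⟨(0:ℚ), hsup_pt 0 h0 0 (by norm_num) (fun w _ hw => by norm_num at hw ⊢; exact hw)⟩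
  · left
    exact ⟨(1:ℚ), hsup_pt 1 h1 1 (by norm_num) (fun w hw _ => by
      have := (hV01 hw).2; norm_num; linarith)⟩
  · intro v hv ε hε
    by_cases hiso : ∃ w, w < v ∧ V ∩ Set.Ioo w v = ∅
    · exact ⟨v, Or.inr ⟨hv, hiso⟩, by linarith, le_rfl⟩
    · push_neg at hiso
      have := hiso (v - ε/2) (by linarith)
      obtain ⟨v', hv'V, hv'1, hv'2⟩ := this
      obtain ⟨q, hq1, hq2⟩ := exists_rat_btwn hv'2
      refine ⟨sSup (V ∩ Set.Iic (q:ℝ)), Or.inl ⟨q, rfl⟩, ?_, ?_⟩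
      · have : v' ≤ sSup (V ∩ Set.Iic (q:ℝ)) :=
          le_csSup (hbddV.mono Set.inter_subset_left) ⟨hv'V, hq1.le⟩
        linarith
      · have : sSup (V ∩ Set.Iic (q:ℝ)) ≤ (q:ℝ) :=
          csSup_le ⟨v', hv'V, hq1.le⟩ (fun w hw => hw.2)
        linarith
end Chunk3

section Chunk4
variable {S : Type*} [MeasurableSpace S]

lemma pi_pair_null (ν : Measure S) [IsFiniteMeasure ν] {M : Set (S × S)}
    (hM : MeasurableSet M) (hM0 : ν.prod ν M = 0) (i j : Fin 3) (hij : i ≠ j) :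
    (Measure.pi fun _ : Fin 3 => ν) {x | (x i, x j) ∈ M} = 0 := by
  set f : (Fin 3 → S) → S × S := fun x => (x i, x j) with hf
  have hfm : Measurable f := (measurable_pi_apply i).prodMk (measurable_pi_apply j)
  haveI : IsFiniteMeasure ((ν Set.univ) • ν) := by
    constructor
    rw [Measure.smul_apply, smul_eq_mul]
    exact ENNReal.mul_lt_top (measure_lt_top ν _) (measure_lt_top ν _)
  have hmap : Measure.map f (Measure.pi fun _ : Fin 3 => ν) = ((ν Set.univ) • ν).prod ν := by
    refine (Measure.prod_eq ?_).symm
    intro s t hs ht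
    rw [Measure.map_apply hfm (hs.prod ht)]
    have hpre : f ⁻¹' (s ×ˢ t) =
        Set.univ.pi (fun k => if k = i then s else if k = j then t else Set.univ) := by
      ext x
      simp only [Set.mem_preimage, Set.mem_prod, Set.mem_pi, Set.mem_univ, true_implies, hf]
      constructor
      · rintro ⟨h1, h2⟩ k
        by_cases hki : k = i
        · subst hki; simp [if_pos rfl, h1]
        · by_cases hkj : k = j
          · subst hkj; simp [if_neg hki, h2]
          · simp [if_neg hki, if_neg hkj]
      · intro h
        constructor
        · have := h i; simpa using this
        · have := h j; simp [if_neg (Ne.symm hij)] at this; exact this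
    rw [hpre, Measure.pi_pi]
    simp only [Measure.smul_apply, smul_eq_mul]
    fin_cases i <;> fin_cases j <;>
      simp_all [Fin.prod_univ_three] <;> ring
  have hval : (Measure.pi fun _ : Fin 3 => ν) {x | (x i, x j) ∈ M} =
      (((ν Set.univ) • ν).prod ν) M := by
    have : {x : Fin 3 → S | (x i, x j) ∈ M} = f ⁻¹' M := rfl
    rw [this, ← Measure.map_apply hfm hM, hmap]
  rw [hval]
  rw [Measure.measure_prod_null hM] at hM0 ⊢
  exact Filter.Eventually.filter_mono (Measure.ae_smul_measure_le _) hM0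
end Chunk4

section PiCoord
variable {S : Type*} [MeasurableSpace S]

lemma pi_coord_null (ν : Measure S) [IsFiniteMeasure ν] {s : Set S}
    (hs : MeasurableSet s) (h0 : ν s = 0) (i : Fin 3) :
    (Measure.pi fun _ : Fin 3 => ν) {x | x i ∈ s} = 0 := by
  have hpre : {x : Fin 3 → S | x i ∈ s} =
      Set.univ.pi (fun k => if k = i then s else Set.univ) := by
    ext x
    simp only [Set.mem_setOf_eq, Set.mem_pi, Set.mem_univ, true_implies]
    constructor
    · intro h k
      by_cases hk : k = i
      · subst hk; simpa using h
      · simp [if_neg hk]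
    · intro h
      have := h i; simpa using this
  rw [hpre, Measure.pi_pi]
  refine Finset.prod_eq_zero (Finset.mem_univ i) ?_
  simpa using h0
end PiCoord
/-- Decomposition of a tournament kernel: a countable family of disjoint positive-measure
sets carrying irreducible restrictions, linearly ordered by `≺`, whose complement `I`
carries a transitive restriction on every positive-measure subset, with a.e. point of `I`
comparable to each component. -/
theorem stmt18 {S : Type*} [MeasurableSpace S] (μ : Measure S) [IsProbabilityMeasure μ]
    (W : S → S → ℝ) (hW : IsTournamentKernel μ W) :
    ∃ (Q : Type) (_ : Countable Q) (T : Q → Set S),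
      (∀ i : Q, MeasurableSet (T i)) ∧
      (∀ i : Q, 0 < μ (T i)) ∧
      (∀ i j : Q, i ≠ j → Disjoint (T i) (T j)) ∧
      -- (1) each restriction `W|_{T i}` is irreducible
      (∀ i : Q, ¬ ∃ B : Set S, MeasurableSet B ∧ B ⊆ T i ∧ 0 < μ B ∧ μ B < μ (T i) ∧
        ∀ᵐ p ∂(μ.prod μ), p.1 ∈ B → p.2 ∈ T i \ B → W p.1 p.2 = 1) ∧
      -- (2) `≺` linearly orders the components
      (∃ _ : LinearOrder Q, ∀ i j : Q, i < j → KPrec μ W (T i) (T j)) ∧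
      -- (3) every positive-measure subset of `I` carries a transitive restriction
      (∀ A : Set S, MeasurableSet A → A ⊆ (⋃ i : Q, T i)ᶜ → 0 < μ A →
        ∀ᵐ x ∂(Measure.pi fun _ : Fin 3 => μ.restrict A),
          0 < W (x 0) (x 1) → 0 < W (x 1) (x 2) → W (x 0) (x 2) = 1) ∧
      -- (4) a.e. point of `I` dominates or is dominated by each component
      (∀ᵐ x ∂(μ.restrict (⋃ i : Q, T i)ᶜ), ∀ i : Q,
        (∀ᵐ y ∂(μ.restrict (T i)), W x y = 1) ∨
        (∀ᵐ y ∂(μ.restrict (T i)), W x y = 0)) := by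
  classical
  -- the set of measures of initial segments
  set V := segMeasures μ W with hVdef
  have hV01 : V ⊆ Set.Icc 0 1 := segMeasures_subset
  have h0V : (0:ℝ) ∈ V := zero_mem_segMeasures
  have h1V : (1:ℝ) ∈ V := one_mem_segMeasures
  have hsupV : ∀ T ⊆ V, T.Nonempty → sSup T ∈ V :=
    fun T hT hne => sSup_mem_segMeasures hW hT hne
  have hinfV : ∀ T ⊆ V, T.Nonempty → sInf T ∈ V :=
    fun T hT hne => sInf_mem_segMeasures hW hT hne
  obtain ⟨D, hDc, hDV, h0D, h1D, happrox⟩ := exists_skeleton hV01 h0V h1V hsupV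
  have hDIcc : D ⊆ Set.Icc 0 1 := fun d hd => hV01 (hDV hd)
  -- representatives
  have hrep : ∀ d ∈ D, ∃ B : Set S, IsInitSeg μ W B ∧ (μ B).toReal = d := by
    intro d hd
    obtain ⟨B, hB, hBv⟩ := hDV hd
    exact ⟨B, hB, hBv⟩
  choose! C0 hC0init hC0val using hrep
  set C : ℝ → Set S := fun d =>
    if d = 0 then ∅ else if d = 1 then Set.univ else C0 d with hCdef
  have hCinit : ∀ d ∈ D, IsInitSeg μ W (C d) := by
    intro d hd
    by_cases h0 : d = 0
    · simp only [hCdef, if_pos h0]; exact initSeg_empty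
    · by_cases h1 : d = 1
      · simp only [hCdef, if_neg h0, if_pos h1]; exact initSeg_univ
      · simp only [hCdef, if_neg h0, if_neg h1]; exact hC0init d hd
  have hCval : ∀ d ∈ D, (μ (C d)).toReal = d := by
    intro d hd
    by_cases h0 : d = 0
    · simp only [hCdef, if_pos h0]; simp [h0]
    · by_cases h1 : d = 1
      · simp only [hCdef, if_neg h0, if_pos h1]; simp [h1]
      · simp only [hCdef, if_neg h0, if_neg h1]; exact hC0val d hd
  have hC0empty : C 0 = ∅ := by simp [hCdef]
  have hC1univ : C 1 = Set.univ := by norm_num [hCdef]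
  -- measure of unions and intersections of the representatives
  have hUnion : ∀ E' ⊆ D, E'.Nonempty →
      IsInitSeg μ W (⋃ d ∈ E', C d) ∧ (μ (⋃ d ∈ E', C d)).toReal = sSup E' := by
    intro E' hE'D hne
    haveI : Countable ↥E' := ((hDc.mono hE'D).to_subtype)
    have hbUnion : (⋃ d ∈ E', C d) = ⋃ d : E', C d := Set.biUnion_eq_iUnion E' (fun d _ => C d)
    have hinit : IsInitSeg μ W (⋃ d ∈ E', C d) := by
      rw [hbUnion]; exact initSeg_iUnion (fun d => hCinit d.1 (hE'D d.2))
    refine ⟨hinit, ?_⟩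
    have hbdd : BddAbove E' := ⟨1, fun v hv => (hDIcc (hE'D hv)).2⟩
    have hsupmem : sSup E' ∈ V := hsupV E' (fun d hd => hDV (hE'D hd)) hne
    obtain ⟨Bstar, hBstar, hBstarval0⟩ := hsupmem
    have hBstarval : (μ Bstar).toReal = sSup E' := hBstarval0
    have hnull : ∀ d : E', μ (C d.1 \ Bstar) = 0 := by
      intro d
      refine initSeg_mono' hW (hCinit d.1 (hE'D d.2)) hBstar ?_
      rw [hCval d.1 (hE'D d.2), hBstarval]
      exact le_csSup hbdd d.2
    have hle : μ (⋃ d ∈ E', C d) ≤ μ Bstar := by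
      have hsub : (⋃ d ∈ E', C d) ⊆ Bstar ∪ ⋃ d : E', (C d.1 \ Bstar) := by
        rw [hbUnion]
        rintro x hx
        obtain ⟨d, hd⟩ := Set.mem_iUnion.1 hx
        by_cases hxB : x ∈ Bstar
        · exact Or.inl hxB
        · exact Or.inr (Set.mem_iUnion.2 ⟨d, hd, hxB⟩)
      refine le_trans (measure_mono hsub) ?_
      refine le_trans (measure_union_le _ _) ?_
      rw [measure_iUnion_null hnull, add_zero]
    have hge : ∀ d ∈ E', d ≤ (μ (⋃ d ∈ E', C d)).toReal := by
      intro d hd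
      rw [← hCval d (hE'D hd)]
      exact ENNReal.toReal_mono (measure_ne_top μ _) (measure_mono (Set.subset_biUnion_of_mem hd))
    refine le_antisymm ?_ (csSup_le hne hge)
    calc (μ (⋃ d ∈ E', C d)).toReal ≤ (μ Bstar).toReal :=
      ENNReal.toReal_mono (measure_ne_top μ _) hle
    _ = sSup E' := hBstarval
  have hInter : ∀ E' ⊆ D, E'.Nonempty →
      IsInitSeg μ W (⋂ d ∈ E', C d) ∧ (μ (⋂ d ∈ E', C d)).toReal = sInf E' := by
    intro E' hE'D hne
    haveI : Countable ↥E' := ((hDc.mono hE'D).to_subtype)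
    haveI : Nonempty ↥E' := hne.to_subtype
    have hbInter : (⋂ d ∈ E', C d) = ⋂ d : E', C d := Set.biInter_eq_iInter E' (fun d _ => C d)
    have hinit : IsInitSeg μ W (⋂ d ∈ E', C d) := by
      rw [hbInter]; exact initSeg_iInter (fun d => hCinit d.1 (hE'D d.2))
    refine ⟨hinit, ?_⟩
    have hbdd : BddBelow E' := ⟨0, fun v hv => (hDIcc (hE'D hv)).1⟩
    have hinfmem : sInf E' ∈ V := hinfV E' (fun d hd => hDV (hE'D hd)) hne
    obtain ⟨Bstar, hBstar, hBstarval0⟩ := hinfmem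
    have hBstarval : (μ Bstar).toReal = sInf E' := hBstarval0
    have hnull : ∀ d : E', μ (Bstar \ C d.1) = 0 := by
      intro d
      refine initSeg_mono' hW hBstar (hCinit d.1 (hE'D d.2)) ?_
      rw [hCval d.1 (hE'D d.2), hBstarval]
      exact csInf_le hbdd d.2
    have hge : μ Bstar ≤ μ (⋂ d ∈ E', C d) + μ (⋃ d : E', (Bstar \ C d.1)) := by
      refine le_trans (measure_mono ?_) (measure_union_le _ _)
      intro x hx
      by_cases hxI : x ∈ ⋂ d ∈ E', C d
      · exact Or.inl hxI
      · rw [hbInter] at hxI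
        have : ¬ ∀ d : E', x ∈ C d.1 := fun h => hxI (Set.mem_iInter.2 h)
        push_neg at this
        obtain ⟨d, hd⟩ := this
        exact Or.inr (Set.mem_iUnion.2 ⟨d, hx, hd⟩)
    have hge' : (μ Bstar).toReal ≤ (μ (⋂ d ∈ E', C d)).toReal := by
      rw [measure_iUnion_null hnull, add_zero] at hge
      exact ENNReal.toReal_mono (measure_ne_top μ _) hge
    have hle : ∀ d ∈ E', (μ (⋂ d ∈ E', C d)).toReal ≤ d := by
      intro d hd
      rw [← hCval d (hE'D hd)]
      exact ENNReal.toReal_mono (measure_ne_top μ _) (measure_mono (Set.biInter_subset_of_mem hd))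
    refine le_antisymm (le_csInf hne hle) ?_
    rw [← hBstarval]
    exact hge'
  -- the canonical chain
  set sfun : ℝ → ℝ := fun t => sSup (D ∩ Set.Iic t) with hsdef
  set L : ℝ → Set S := fun t => ⋃ d ∈ D ∩ Set.Iic t, C d with hLdef
  have hDIic : ∀ t, 0 ≤ t → (D ∩ Set.Iic t).Nonempty := fun t ht => ⟨0, h0D, ht⟩
  have hL : ∀ t, 0 ≤ t → IsInitSeg μ W (L t) ∧ (μ (L t)).toReal = sfun t :=
    fun t ht => hUnion (D ∩ Set.Iic t) Set.inter_subset_left (hDIic t ht)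
  have hLmono : ∀ t t', t ≤ t' → L t ⊆ L t' := by
    intro t t' h
    apply Set.biUnion_subset_biUnion_left
    exact fun d hd => ⟨hd.1, le_trans hd.2 h⟩
  have hsV : ∀ v ∈ V, sfun v = v := by
    intro v hv
    have hbdd : BddAbove (D ∩ Set.Iic v) := ⟨1, fun d hd => (hDIcc hd.1).2⟩
    refine le_antisymm (csSup_le (hDIic v (hV01 hv).1) (fun d hd => hd.2)) ?_
    by_contra hc
    push_neg at hc
    obtain ⟨d, hdD, hd1, hd2⟩ := happrox v hv (v - sfun v) (by linarith)
    have : d ≤ sfun v := le_csSup hbdd ⟨hdD, hd2⟩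
    linarith
  -- gap endpoints
  set Aep : ℝ → ℝ := fun t => sSup (V ∩ Set.Iic t) with hAdef
  set Bep : ℝ → ℝ := fun t => sInf (V ∩ Set.Ici t) with hBdef
  set E : Set (ℝ × ℝ) := {p | ∃ t, 0 ≤ t ∧ t ≤ 1 ∧ t ∉ V ∧ p = (Aep t, Bep t)} with hEdef
  have hbddV : BddAbove V := ⟨1, fun x hx => (hV01 hx).2⟩
  have hbddVb : BddBelow V := ⟨0, fun x hx => (hV01 hx).1⟩
  have hIoo : ∀ {a b v : ℝ}, V ∩ Set.Ioo a b = ∅ → v ∈ V → a < v → v < b → False := by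
    intro a b v hgap hv h1 h2
    have hx : v ∈ V ∩ Set.Ioo a b := ⟨hv, Set.mem_Ioo.2 ⟨h1, h2⟩⟩
    rw [hgap] at hx; exact hx
  have hE_char : ∀ p ∈ E, p.1 ∈ V ∧ p.2 ∈ V ∧ 0 ≤ p.1 ∧ p.1 < p.2 ∧ p.2 ≤ 1 ∧
      V ∩ Set.Ioo p.1 p.2 = ∅ := by
    rintro p ⟨t, ht0, ht1, htV, rfl⟩
    have hne1 : (V ∩ Set.Iic t).Nonempty := ⟨0, h0V, ht0⟩
    have hne2 : (V ∩ Set.Ici t).Nonempty := ⟨1, h1V, ht1⟩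
    have hA_V : Aep t ∈ V := hsupV _ Set.inter_subset_left hne1
    have hB_V : Bep t ∈ V := hinfV _ Set.inter_subset_left hne2
    have hA_le : Aep t ≤ t := csSup_le hne1 (fun v hv => hv.2)
    have hB_ge : t ≤ Bep t := le_csInf hne2 (fun v hv => hv.2)
    have hA_lt : Aep t < t := lt_of_le_of_ne hA_le (fun h => htV (h ▸ hA_V))
    have hB_gt : t < Bep t := lt_of_le_of_ne hB_ge (fun h => htV (h ▸ hB_V))
    refine ⟨hA_V, hB_V, ?_, lt_trans hA_lt hB_gt, ?_, ?_⟩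
    · exact le_csSup (hbddV.mono Set.inter_subset_left) ⟨h0V, ht0⟩
    · exact csInf_le (hbddVb.mono Set.inter_subset_left) ⟨h1V, ht1⟩
    · rw [Set.eq_empty_iff_forall_notMem]
      rintro v ⟨hvV, hv1, hv2⟩
      rcases le_or_gt v t with h | h
      · have : v ≤ Aep t := le_csSup (hbddV.mono Set.inter_subset_left)
          (Set.mem_inter hvV (Set.mem_Iic.2 h))
        exact absurd this (not_le.2 hv1)
      · have : Bep t ≤ v := csInf_le (hbddVb.mono Set.inter_subset_left)
          (Set.mem_inter hvV (Set.mem_Ici.2 h.le))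
        exact absurd this (not_le.2 hv2)
  have hE_univ : ∀ a b : ℝ, a ∈ V → b ∈ V → a < b → V ∩ Set.Ioo a b = ∅ → (a, b) ∈ E := by
    intro a b haV hbV hab hgap
    have ha0 : 0 ≤ a := (hV01 haV).1
    have hb1 : b ≤ 1 := (hV01 hbV).2
    have hmem1 : a ∈ V ∩ Set.Iic ((a+b)/2) := Set.mem_inter haV (Set.mem_Iic.2 (by linarith))
    have hmem2 : b ∈ V ∩ Set.Ici ((a+b)/2) := Set.mem_inter hbV (Set.mem_Ici.2 (by linarith))
    refine ⟨(a+b)/2, by linarith, by linarith, ?_, ?_⟩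
    · intro hmem
      exact hIoo hgap hmem (by linarith) (by linarith)
    · have hA : Aep ((a+b)/2) = a := by
        apply le_antisymm
        · refine csSup_le ⟨a, hmem1⟩ ?_
          rintro v ⟨hvV, hvle⟩
          by_contra hc; push_neg at hc
          exact hIoo hgap hvV hc (by simp only [Set.mem_Iic] at hvle; linarith)
        · exact le_csSup (hbddV.mono Set.inter_subset_left) hmem1
      have hB : Bep ((a+b)/2) = b := by
        apply le_antisymm
        · exact csInf_le (hbddVb.mono Set.inter_subset_left) hmem2
        · refine le_csInf ⟨b, hmem2⟩ ?_
          rintro v ⟨hvV, hvge⟩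
          by_contra hc; push_neg at hc
          exact hIoo hgap hvV (by simp only [Set.mem_Ici] at hvge; linarith) hc
      rw [hA, hB]
  have hE_eq : ∀ p ∈ E, ∀ q ∈ E, (Set.Ioo p.1 p.2 ∩ Set.Ioo q.1 q.2).Nonempty → p = q := by
    intro p hp q hq ⟨x, hxp, hxq⟩
    obtain ⟨hp1V, hp2V, _, hplt, _, hpgap⟩ := hE_char p hp
    obtain ⟨hq1V, hq2V, _, hqlt, _, hqgap⟩ := hE_char q hq
    have hnotp : ∀ v ∈ V, ¬ (p.1 < v ∧ v < p.2) :=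
      fun v hv hcon => hIoo hpgap hv hcon.1 hcon.2
    have hnotq : ∀ v ∈ V, ¬ (q.1 < v ∧ v < q.2) :=
      fun v hv hcon => hIoo hqgap hv hcon.1 hcon.2
    have h1 : q.1 ≤ p.1 := by
      by_contra hc; push_neg at hc
      exact hnotp q.1 hq1V ⟨hc, lt_trans hxq.1 hxp.2⟩
    have h2 : p.1 ≤ q.1 := by
      by_contra hc; push_neg at hc
      exact hnotq p.1 hp1V ⟨hc, lt_trans hxp.1 hxq.2⟩
    have h3 : q.2 ≤ p.2 := by
      by_contra hc; push_neg at hc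
      exact hnotq p.2 hp2V ⟨lt_of_lt_of_le hxq.1 (le_trans hxp.2.le le_rfl) |>.trans_le' (by linarith), hc⟩
    have h4 : p.2 ≤ q.2 := by
      by_contra hc; push_neg at hc
      exact hnotp q.2 hq2V ⟨by linarith [hxp.1, hxq.2], hc⟩
    exact Prod.ext (le_antisymm h1 h2).symm (le_antisymm h4 h3)
  have hE_cnt : E.Countable := by
    refine Set.PairwiseDisjoint.countable_of_isOpen
      (s := fun p : ℝ × ℝ => Set.Ioo p.1 p.2) ?_ ?_ ?_
    · intro p hp q hq hpq
      rw [Function.onFun]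
      rw [Set.disjoint_iff_inter_eq_empty]
      by_contra hc
      exact hpq (hE_eq p hp q hq (Set.nonempty_iff_ne_empty.2 hc))
    · exact fun p _ => isOpen_Ioo
    · exact fun p hp => Set.nonempty_Ioo.2 (hE_char p hp).2.2.2.1
  haveI hQc : Countable ↥E := hE_cnt.to_subtype
  set T : ↥E → Set S := fun g => L g.1.2 \ L g.1.1 with hTdef
  -- basic facts about the pieces
  have hg1V : ∀ g : ↥E, g.1.1 ∈ V := fun g => (hE_char g.1 g.2).1
  have hg2V : ∀ g : ↥E, g.1.2 ∈ V := fun g => (hE_char g.1 g.2).2.1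
  have hg10 : ∀ g : ↥E, 0 ≤ g.1.1 := fun g => (hE_char g.1 g.2).2.2.1
  have hglt : ∀ g : ↥E, g.1.1 < g.1.2 := fun g => (hE_char g.1 g.2).2.2.2.1
  have hggap : ∀ g : ↥E, V ∩ Set.Ioo g.1.1 g.1.2 = ∅ := fun g => (hE_char g.1 g.2).2.2.2.2.2
  have hg20 : ∀ g : ↥E, 0 ≤ g.1.2 := fun g => le_trans (hg10 g) (hglt g).le
  have hLa : ∀ g : ↥E, IsInitSeg μ W (L g.1.1) ∧ (μ (L g.1.1)).toReal = g.1.1 := by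
    intro g
    refine ⟨(hL _ (hg10 g)).1, ?_⟩
    rw [(hL _ (hg10 g)).2]; exact hsV _ (hg1V g)
  have hLb : ∀ g : ↥E, IsInitSeg μ W (L g.1.2) ∧ (μ (L g.1.2)).toReal = g.1.2 := by
    intro g
    refine ⟨(hL _ (hg20 g)).1, ?_⟩
    rw [(hL _ (hg20 g)).2]; exact hsV _ (hg2V g)
  have hTmeas : ∀ g : ↥E, MeasurableSet (T g) := fun g => ((hLb g).1.1).diff ((hLa g).1.1)
  have hTsub : ∀ g : ↥E, L g.1.1 ⊆ L g.1.2 := fun g => hLmono _ _ (hglt g).le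
  have hTval : ∀ g : ↥E, (μ (T g)).toReal = g.1.2 - g.1.1 := by
    intro g
    have hd : μ (T g) = μ (L g.1.2) - μ (L g.1.1) :=
      measure_diff (hTsub g) ((hLa g).1.1).nullMeasurableSet (measure_ne_top μ _)
    rw [hd, ENNReal.toReal_sub_of_le (measure_mono (hTsub g)) (measure_ne_top μ _),
      (hLa g).2, (hLb g).2]
  have hTpos : ∀ g : ↥E, 0 < μ (T g) := by
    intro g
    rcases (zero_le : (0:ENNReal) ≤ μ (T g)).lt_or_eq with h | h
    · exact h
    · exfalso
      have := hTval g
      rw [← h] at this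
      simp only [ENNReal.toReal_zero] at this
      have := hglt g
      linarith
  -- ordering of the gaps
  have horder : ∀ g h : ↥E, g.1.1 < h.1.1 → g.1.2 ≤ h.1.1 := by
    intro g h hlt
    by_contra hc; push_neg at hc
    have hx : h.1.1 ∈ V ∩ Set.Ioo g.1.1 g.1.2 := ⟨hg1V h, hlt, hc⟩
    rw [hggap g] at hx; exact hx
  have hTdisj : ∀ g h : ↥E, g.1.1 < h.1.1 → Disjoint (T g) (T h) := by
    intro g h hlt
    rw [Set.disjoint_left]
    intro x hxg hxh
    have h1 : x ∈ L g.1.2 := hxg.1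
    have h2 : x ∈ L h.1.1 := hLmono _ _ (horder g h hlt) h1
    exact hxh.2 h2
  have hinj : Function.Injective (fun g : ↥E => g.1.1) := by
    intro g h hfe
    have hfe' : g.1.1 = h.1.1 := hfe
    have hmin : g.1.1 < min g.1.2 h.1.2 := lt_min (hglt g) (hfe' ▸ hglt h)
    apply Subtype.ext
    apply hE_eq g.1 g.2 h.1 h.2
    refine ⟨(g.1.1 + min g.1.2 h.1.2)/2, ?_, ?_⟩
    · exact Set.mem_Ioo.2 ⟨by linarith, by
        have : min g.1.2 h.1.2 ≤ g.1.2 := min_le_left _ _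
        linarith⟩
    · refine Set.mem_Ioo.2 ⟨by rw [← hfe']; linarith, by
        have : min g.1.2 h.1.2 ≤ h.1.2 := min_le_right _ _
        linarith⟩
  have hImeas : MeasurableSet (⋃ i : ↥E, T i)ᶜ := (MeasurableSet.iUnion (fun i => hTmeas i)).compl
  refine ⟨↥E, hQc, T, hTmeas, hTpos, ?_, ?_, ?_, ?_, ?_⟩
  · -- disjointness
    intro i j hij
    rcases lt_trichotomy i.1.1 j.1.1 with h | h | h
    · exact hTdisj i j h
    · exact absurd (hinj h) hij
    · exact (hTdisj j i h).symm
  · -- (1) irreducibility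
    rintro g ⟨B, hBm, hBsub, hBpos, hBlt, hBdom⟩
    have hdisjLaB : Disjoint (L g.1.1) B := by
      rw [Set.disjoint_right]
      intro y hyB
      exact (hBsub hyB).2
    have hBnewInit : IsInitSeg μ W (L g.1.1 ∪ B) := by
      refine ⟨(hLa g).1.1.union hBm, ?_⟩
      filter_upwards [(hLa g).1.2, (hLb g).1.2, hBdom] with p h1 h2 h3
      rintro (hp1 | hp1) hp2
      · exact h1 hp1 (fun h => hp2 (Or.inl h))
      · by_cases hpb : p.2 ∈ L g.1.2
        · exact h3 hp1 ⟨⟨hpb, fun hLa' => hp2 (Or.inl hLa')⟩, fun hB' => hp2 (Or.inr hB')⟩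
        · exact h2 (hBsub hp1).1 hpb
    have hval : (μ (L g.1.1 ∪ B)).toReal = g.1.1 + (μ B).toReal := by
      rw [measure_union hdisjLaB hBm,
        ENNReal.toReal_add (measure_ne_top μ _) (measure_ne_top μ _), (hLa g).2]
    have hmemV : (μ (L g.1.1 ∪ B)).toReal ∈ V := ⟨L g.1.1 ∪ B, hBnewInit, rfl⟩
    have h1 : 0 < (μ B).toReal := ENNReal.toReal_pos hBpos.ne' (measure_ne_top μ _)
    have h2 : (μ B).toReal < (μ (T g)).toReal :=
      ENNReal.toReal_strict_mono (measure_ne_top μ _) hBlt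
    rw [hTval g] at h2
    exact hIoo (hggap g) hmemV (by rw [hval]; linarith) (by rw [hval]; linarith)
  · -- (2) linear order
    refine ⟨LinearOrder.lift' (fun g : ↥E => g.1.1) hinj, ?_⟩
    intro i j hij
    have hij' : i.1.1 < j.1.1 := hij
    have hTi : T i ⊆ L j.1.1 := fun y hy => hLmono _ _ (horder i j hij') hy.1
    show ∀ᵐ p ∂(μ.prod μ), p.1 ∈ T i → p.2 ∈ T j → W p.1 p.2 = 1
    filter_upwards [(hLa j).1.2] with p hp hp1 hp2
    exact hp (hTi hp1) hp2.2
  · -- (3) transitivity on subsets of the complement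
    intro A hAm hAsub hApos
    haveI : IsFiniteMeasure (μ.restrict A) := by
      constructor
      rw [Measure.restrict_apply_univ]
      exact measure_lt_top μ A
    have hWm : Measurable (Function.uncurry W) := hW.1
    have hW2 : Measurable (fun p : S × S => W p.1 p.2) := hWm
    have hW2' : Measurable (fun p : S × S => W p.2 p.1) := hW2.comp measurable_swap
    have hCm : ∀ d ∈ D, MeasurableSet (C d) := fun d hd => (hCinit d hd).1
    set N : Set (S × S) := {p | W p.1 p.2 + W p.2 p.1 ≠ 1} ∪
      ⋃ d ∈ D, {p : S × S | p.1 ∈ C d ∧ p.2 ∉ C d ∧ W p.1 p.2 ≠ 1} with hNdef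
    have hNmeas : MeasurableSet N := by
      apply MeasurableSet.union
      · have h1 : MeasurableSet {p : S × S | W p.1 p.2 + W p.2 p.1 = 1} :=
          measurableSet_eq_fun (hW2.add hW2') measurable_const
        exact h1.compl
      · refine MeasurableSet.biUnion hDc (fun d hd => ?_)
        have heq : {p : S × S | p.1 ∈ C d ∧ p.2 ∉ C d ∧ W p.1 p.2 ≠ 1} =
            ((C d) ×ˢ (C d)ᶜ) ∩ {p : S × S | W p.1 p.2 = 1}ᶜ := by
          ext p
          simp only [Set.mem_setOf_eq, Set.mem_inter_iff, Set.mem_prod, Set.mem_compl_iff,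
            and_assoc]
        rw [heq]
        exact (((hCm d hd).prod (hCm d hd).compl)).inter
          (measurableSet_eq_fun hW2 measurable_const).compl
    have hNnull : (μ.prod μ) N = 0 := by
      apply measure_union_null
      · exact ae_iff.1 hW.2.2
      · rw [measure_biUnion_null_iff hDc]
        intro d hd
        refine measure_mono_null ?_ (ae_iff.1 (hCinit d hd).2)
        intro p hp
        simp only [Set.mem_setOf_eq] at hp ⊢
        push_neg
        exact ⟨hp.1, hp.2.1, hp.2.2⟩
    have hNν : ((μ.restrict A).prod (μ.restrict A)) N = 0 := by
      rw [Measure.prod_restrict, Measure.restrict_apply hNmeas]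
      exact measure_mono_null Set.inter_subset_left hNnull
    set Bad : Set (S × S) := {p | ∀ d ∈ D, (p.1 ∈ C d ↔ p.2 ∈ C d)} with hBadDef
    have hBadmeas : MeasurableSet Bad := by
      have heq : Bad = ⋂ d ∈ D, ((C d ×ˢ C d) ∪ ((C d)ᶜ ×ˢ (C d)ᶜ)) := by
        ext p
        simp only [hBadDef, Set.mem_setOf_eq, Set.mem_iInter, Set.mem_union, Set.mem_prod,
          Set.mem_compl_iff]
        constructor
        · intro h d hd
          by_cases h1 : p.1 ∈ C d
          · exact Or.inl ⟨h1, (h d hd).1 h1⟩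
          · exact Or.inr ⟨h1, fun h2 => h1 ((h d hd).2 h2)⟩
        · intro h d hd
          rcases h d hd with ⟨h1, h2⟩ | ⟨h1, h2⟩
          · exact iff_of_true h1 h2
          · exact iff_of_false h1 h2
      rw [heq]
      exact MeasurableSet.biInter hDc (fun d hd =>
        ((hCm d hd).prod (hCm d hd)).union ((hCm d hd).compl.prod (hCm d hd).compl))
    -- sections of Bad inside A are null
    have hBadsec : ∀ x : S, μ ({y | ∀ d ∈ D, (x ∈ C d ↔ y ∈ C d)} ∩ A) = 0 := by
      intro x
      set Dlo := {d ∈ D | x ∉ C d} with hDlo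
      set Dhi := {d ∈ D | x ∈ C d} with hDhi
      have hloD : Dlo ⊆ D := Set.sep_subset _ _
      have hhiD : Dhi ⊆ D := Set.sep_subset _ _
      have hlo_ne : Dlo.Nonempty := ⟨0, h0D, by rw [hC0empty]; exact Set.notMem_empty x⟩
      have hhi_ne : Dhi.Nonempty := ⟨1, h1D, by rw [hC1univ]; trivial⟩
      obtain ⟨hPinit, hPval⟩ := hUnion Dlo hloD hlo_ne
      obtain ⟨hQinit, hQval⟩ := hInter Dhi hhiD hhi_ne
      have hppV : sSup Dlo ∈ V := hPval ▸ ⟨_, hPinit, rfl⟩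
      have hqqV : sInf Dhi ∈ V := hQval ▸ ⟨_, hQinit, rfl⟩
      have hsec_sub : {y | ∀ d ∈ D, (x ∈ C d ↔ y ∈ C d)} ⊆
          (⋂ d ∈ Dhi, C d) \ (⋃ d ∈ Dlo, C d) := by
        intro y hy
        constructor
        · exact Set.mem_iInter₂.2 fun d hd => (hy d hd.1).1 hd.2
        · intro hmem
          obtain ⟨d, hd, hyd⟩ := Set.mem_iUnion₂.1 hmem
          exact hd.2 ((hy d hd.1).2 hyd)
      rcases le_or_gt (sInf Dhi) (sSup Dlo) with hle | hlt
      · have hn : μ ((⋂ d ∈ Dhi, C d) \ (⋃ d ∈ Dlo, C d)) = 0 :=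
          initSeg_mono' hW hQinit hPinit (by rw [hPval, hQval]; exact hle)
        exact measure_mono_null (fun y hy => hsec_sub hy.1) hn
      · have hgap : V ∩ Set.Ioo (sSup Dlo) (sInf Dhi) = ∅ := by
          rw [Set.eq_empty_iff_forall_notMem]
          rintro v ⟨hvV, hv1, hv2⟩
          obtain ⟨d, hdD, hd1, hd2⟩ := happrox v hvV (v - sSup Dlo) (by linarith)
          by_cases hdx : x ∈ C d
          · have : sInf Dhi ≤ d := csInf_le ⟨0, fun e he => (hDIcc he.1).1⟩ ⟨hdD, hdx⟩
            linarith
          · have : d ≤ sSup Dlo := le_csSup ⟨1, fun e he => (hDIcc he.1).2⟩ ⟨hdD, hdx⟩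
            linarith
        have hppqqE : ((sSup Dlo, sInf Dhi) : ℝ × ℝ) ∈ E := hE_univ _ _ hppV hqqV hlt hgap
        have hpp0 : (0:ℝ) ≤ sSup Dlo := (hV01 hppV).1
        have hqq0 : (0:ℝ) ≤ sInf Dhi := (hV01 hqqV).1
        have h1 : μ ((⋂ d ∈ Dhi, C d) \ L (sInf Dhi)) = 0 := by
          refine initSeg_mono' hW hQinit (hL _ hqq0).1 ?_
          rw [hQval, (hL _ hqq0).2, hsV _ hqqV]
        have h2 : μ (L (sSup Dlo) \ (⋃ d ∈ Dlo, C d)) = 0 := by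
          refine initSeg_mono' hW (hL _ hpp0).1 hPinit ?_
          rw [hPval, (hL _ hpp0).2, hsV _ hppV]
        refine measure_mono_null ?_ (measure_union_null h1 h2)
        rintro y ⟨hy, hyA⟩
        have hysec := hsec_sub hy
        have hyT : y ∉ T ⟨(sSup Dlo, sInf Dhi), hppqqE⟩ :=
          fun h => (hAsub hyA) (Set.mem_iUnion.2 ⟨⟨(sSup Dlo, sInf Dhi), hppqqE⟩, h⟩)
        by_cases hyq : y ∈ L (sInf Dhi)
        · have hyp : y ∈ L (sSup Dlo) := by
            by_contra hc
            exact hyT ⟨hyq, hc⟩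
          exact Or.inr ⟨hyp, hysec.2⟩
        · exact Or.inl ⟨hysec.1, hyq⟩
    set BadA := Bad ∩ (Set.univ ×ˢ A) with hBadA
    have hBadAmeas : MeasurableSet BadA := hBadmeas.inter (MeasurableSet.univ.prod hAm)
    have hBadAnull : (μ.prod μ) BadA = 0 := by
      rw [Measure.measure_prod_null hBadAmeas]
      refine Filter.Eventually.of_forall (fun x => ?_)
      have hsec : Prod.mk x ⁻¹' BadA = {y | ∀ d ∈ D, (x ∈ C d ↔ y ∈ C d)} ∩ A := by
        ext y
        simp only [hBadA, hBadDef, Set.mem_preimage, Set.mem_inter_iff, Set.mem_setOf_eq,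
          Set.mem_prod, Set.mem_univ, true_and]
      show μ (Prod.mk x ⁻¹' BadA) = 0
      rw [hsec]
      exact hBadsec x
    have hBadν : ((μ.restrict A).prod (μ.restrict A)) BadA = 0 := by
      rw [Measure.prod_restrict, Measure.restrict_apply hBadAmeas]
      exact measure_mono_null Set.inter_subset_left hBadAnull
    have hMmeas : MeasurableSet (N ∪ BadA) := hNmeas.union hBadAmeas
    have hMν : ((μ.restrict A).prod (μ.restrict A)) (N ∪ BadA) = 0 :=
      measure_union_null hNν hBadν
    have hG10 := pi_pair_null (μ.restrict A) hMmeas hMν 1 0 (by decide)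
    have hG21 := pi_pair_null (μ.restrict A) hMmeas hMν 2 1 (by decide)
    have hG02 := pi_pair_null (μ.restrict A) hMmeas hMν 0 2 (by decide)
    have hAc : (μ.restrict A) Aᶜ = 0 := by
      rw [Measure.restrict_apply hAm.compl]
      simp
    have hGA := pi_coord_null (μ.restrict A) hAm.compl hAc 2
    have e10 : ∀ᵐ x ∂(Measure.pi fun _ : Fin 3 => μ.restrict A), (x 1, x 0) ∉ N ∪ BadA := by
      rw [ae_iff]; simp only [not_not]; exact hG10
    have e21 : ∀ᵐ x ∂(Measure.pi fun _ : Fin 3 => μ.restrict A), (x 2, x 1) ∉ N ∪ BadA := by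
      rw [ae_iff]; simp only [not_not]; exact hG21
    have e02 : ∀ᵐ x ∂(Measure.pi fun _ : Fin 3 => μ.restrict A), (x 0, x 2) ∉ N ∪ BadA := by
      rw [ae_iff]; simp only [not_not]; exact hG02
    have eA : ∀ᵐ x ∂(Measure.pi fun _ : Fin 3 => μ.restrict A), x 2 ∈ A := by
      rw [ae_iff]; exact hGA
    filter_upwards [e10, e21, e02, eA] with x h10 h21 h02 hx2 hxy hyz
    have hanti : ∀ u v : S, (u, v) ∉ N ∪ BadA → W u v + W v u = 1 := by
      intro u v huv
      by_contra hne
      exact huv (Or.inl (Or.inl hne))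
    have hsep : ∀ u v : S, (u, v) ∉ N ∪ BadA → ∀ d ∈ D, u ∈ C d → v ∉ C d → W u v = 1 := by
      intro u v huv d hd h1 h2
      by_contra hne
      exact huv (Or.inl (Or.inr (Set.mem_iUnion₂.2 ⟨d, hd, h1, h2, hne⟩)))
    have step1 : ∀ d ∈ D, x 1 ∈ C d → x 0 ∈ C d := by
      intro d hd h1mem
      by_contra h0mem
      have hone : W (x 1) (x 0) = 1 := hsep _ _ h10 d hd h1mem h0mem
      have h := hanti _ _ h10
      rw [hone] at h
      linarith
    have step2 : ∀ d ∈ D, x 2 ∈ C d → x 1 ∈ C d := by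
      intro d hd h2mem
      by_contra h1mem
      have hone : W (x 2) (x 1) = 1 := hsep _ _ h21 d hd h2mem h1mem
      have h := hanti _ _ h21
      rw [hone] at h
      linarith
    have hnotbad : (x 0, x 2) ∉ Bad := by
      intro hbad
      exact h02 (Or.inr ⟨hbad, Set.mem_prod.2 ⟨trivial, hx2⟩⟩)
    have : ∃ d ∈ D, ¬ (x 0 ∈ C d ↔ x 2 ∈ C d) := by
      by_contra hc
      push_neg at hc
      exact hnotbad (fun d hd => hc d hd)
    obtain ⟨d, hdD, hdne⟩ := this
    have h0in : x 0 ∈ C d ∧ x 2 ∉ C d := by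
      by_cases h2in : x 2 ∈ C d
      · exact absurd (iff_of_true (step1 d hdD (step2 d hdD h2in)) h2in) hdne
      · by_cases h0in : x 0 ∈ C d
        · exact ⟨h0in, h2in⟩
        · exact absurd (iff_of_false h0in h2in) hdne
    exact hsep _ _ h02 d hdD h0in.1 h0in.2
  · -- (4) comparability of points of I with each component
    have hcomp : ∀ g : ↥E, ∀ᵐ x ∂μ,
        (x ∈ L g.1.1 → ∀ᵐ y ∂μ, y ∉ L g.1.1 → W x y = 1) ∧
        (x ∉ L g.1.2 → ∀ᵐ y ∂μ, y ∈ L g.1.2 → W x y = 0) := by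
      intro g
      have h1 : ∀ᵐ x ∂μ, ∀ᵐ y ∂μ, x ∈ L g.1.1 → y ∉ L g.1.1 → W x y = 1 :=
        Measure.ae_ae_of_ae_prod (hLa g).1.2
      have h2swap : ∀ᵐ p ∂(μ.prod μ), p.2 ∈ L g.1.2 → p.1 ∉ L g.1.2 → W p.2 p.1 = 1 :=
        ae_swap_prod (P := fun p => p.1 ∈ L g.1.2 → p.2 ∉ L g.1.2 → W p.1 p.2 = 1) (hLb g).1.2
      have h2' : ∀ᵐ p ∂(μ.prod μ), p.1 ∉ L g.1.2 → p.2 ∈ L g.1.2 → W p.1 p.2 = 0 := by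
        filter_upwards [h2swap, hW.2.2] with p hp hanti h1' h2'
        have := hp h2' h1'
        linarith
      have h2 : ∀ᵐ x ∂μ, ∀ᵐ y ∂μ, x ∉ L g.1.2 → y ∈ L g.1.2 → W x y = 0 :=
        Measure.ae_ae_of_ae_prod h2'
      filter_upwards [h1, h2] with x hx1 hx2
      constructor
      · intro hmem
        filter_upwards [hx1] with y hy using fun hy' => hy hmem hy'
      · intro hmem
        filter_upwards [hx2] with y hy using fun hy' => hy hmem hy'
    rw [ae_restrict_iff' hImeas]
    have hall := ae_all_iff.2 hcomp
    filter_upwards [hall] with x hx hxI g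
    have hxT : x ∉ T g := fun h => hxI (Set.mem_iUnion.2 ⟨g, h⟩)
    by_cases hxa : x ∈ L g.1.1
    · left
      rw [ae_restrict_iff' (hTmeas g)]
      filter_upwards [(hx g).1 hxa] with y hy hyT
      exact hy hyT.2
    · right
      have hxb : x ∉ L g.1.2 := fun h => hxT ⟨h, hxa⟩
      rw [ae_restrict_iff' (hTmeas g)]
      filter_upwards [(hx g).2 hxb] with y hy hyT
      exact hy hyT.1
end

section
/- Every transitive tournament kernel is 0–1 valued: if W is a tournament kernel on a probability space (S, μ) and W is transitive, then W(x,y) ∈ {0, 1} for (μ×μ)-almost every (x,y) ∈ S×S. -/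
open MeasureTheory

/-- Every transitive tournament kernel is `{0,1}`-valued almost everywhere. -/
theorem stmt19 {S : Type*} [MeasurableSpace S] (μ : Measure S) [IsProbabilityMeasure μ]
    (W : S → S → ℝ) (hW : IsTournamentKernel μ W)
    (htrans : ∀ᵐ x ∂(Measure.pi fun _ : Fin 3 => μ),
      0 < W (x 0) (x 1) → 0 < W (x 1) (x 2) → W (x 0) (x 2) = 1) :
    ∀ᵐ p ∂(μ.prod μ), W p.1 p.2 = 0 ∨ W p.1 p.2 = 1 := by
  obtain ⟨hmeas, hbd, hsum⟩ := hW
  set ν : Measure (S × S × S) := μ.prod (μ.prod μ) with hν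
  -- the map from S × S × S to Fin 3 → S is measure preserving
  have e3 : MeasurePreserving
      (fun q : S × S × S => (MeasurableEquiv.piFinSuccAbove (fun _ : Fin 3 => S) 0).symm
        (q.1, MeasurableEquiv.finTwoArrow.symm q.2)) ν (Measure.pi fun _ : Fin 3 => μ) :=
    ((measurePreserving_piFinSuccAbove (fun _ : Fin 3 => μ) 0).symm _).comp
      ((MeasurePreserving.id μ).prod ((measurePreserving_finTwoArrow μ).symm _))
  have htrans' : ∀ᵐ q ∂ν, 0 < W q.1 q.2.1 → 0 < W q.2.1 q.2.2 → W q.1 q.2.2 = 1 := by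
    filter_upwards [e3.quasiMeasurePreserving.ae htrans] with q hq
    simp [MeasurableEquiv.piFinSuccAbove, MeasurableEquiv.finTwoArrow,
      Fin.insertNthEquiv, finTwoArrowEquiv] at hq
    exact hq
  -- measure preserving maps on triples
  have mp_fst : MeasurePreserving (Prod.fst : S × S → S) (μ.prod μ) μ :=
    ⟨measurable_fst, by rw [Measure.map_fst_prod]; simp⟩
  have mp_snd : MeasurePreserving (Prod.snd : S × S → S) (μ.prod μ) μ :=
    ⟨measurable_snd, by rw [Measure.map_snd_prod]; simp⟩
  -- sum identities on triples
  have hs1 : ∀ᵐ q ∂ν, W q.1 q.2.1 + W q.2.1 q.1 = 1 :=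
    (((MeasurePreserving.id μ).prod mp_fst).quasiMeasurePreserving.ae hsum :)
  have hs2 : ∀ᵐ q ∂ν, W q.1 q.2.2 + W q.2.2 q.1 = 1 :=
    (((MeasurePreserving.id μ).prod mp_snd).quasiMeasurePreserving.ae hsum :)
  have hs3 : ∀ᵐ q ∂ν, W q.2.1 q.2.2 + W q.2.2 q.2.1 = 1 := by
    have : MeasurePreserving (Prod.snd : S × (S × S) → S × S) ν (μ.prod μ) :=
      ⟨measurable_snd, by rw [Measure.map_snd_prod]; simp⟩
    exact this.quasiMeasurePreserving.ae hsum
  -- permuted transitivity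
  have t1 : ∀ᵐ q ∂ν, 0 < W q.1 q.2.2 → 0 < W q.2.2 q.2.1 → W q.1 q.2.1 = 1 := by
    have h : MeasurePreserving (fun q : S × S × S => (q.1, (q.2.2, q.2.1))) ν ν :=
      (MeasurePreserving.id μ).prod Measure.measurePreserving_swap
    exact h.quasiMeasurePreserving.ae htrans'
  have t2 : ∀ᵐ q ∂ν, 0 < W q.2.1 q.2.2 → 0 < W q.2.2 q.1 → W q.2.1 q.1 = 1 := by
    have h : MeasurePreserving (fun q : S × S × S => (q.2.1, (q.2.2, q.1))) ν ν :=
      (measurePreserving_prodAssoc μ μ μ).comp Measure.measurePreserving_swap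
    exact h.quasiMeasurePreserving.ae htrans'
  -- the bad set
  set A : Set (S × S) := {p | ¬ (W p.1 p.2 = 0 ∨ W p.1 p.2 = 1)} with hA
  have hAmeas : MeasurableSet A := by
    have : A = Function.uncurry W ⁻¹' ({0, 1} : Set ℝ)ᶜ := by
      ext p; simp [hA, Function.uncurry]
    rw [this]
    exact hmeas ((MeasurableSet.insert (measurableSet_singleton 1) 0).compl)
  -- key a.e. claim on triples
  have key : ∀ᵐ q ∂ν, (q.1, q.2.1) ∈ A → (q.1, q.2.2) ∉ A := by
    filter_upwards [hs1, hs2, hs3, t1, t2] with q h1 h2 h3 ht1 ht2 hxy hxz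
    obtain ⟨x, y, z⟩ := q
    simp only at h1 h2 h3 ht1 ht2
    simp only [hA, Set.mem_setOf_eq, not_or] at hxy hxz
    obtain ⟨hxy0, hxy1⟩ := hxy
    obtain ⟨hxz0, hxz1⟩ := hxz
    have bxy := hbd x y
    have bxz := hbd x z
    have bzy := hbd z y
    have hxzpos : 0 < W x z := lt_of_le_of_ne bxz.1 (Ne.symm hxz0)
    have hxzlt : W x z < 1 := lt_of_le_of_ne bxz.2 hxz1
    have hzxpos : 0 < W z x := by linarith
    rcases lt_or_eq_of_le bzy.1 with hzy | hzy
    · exact hxy1 (ht1 hxzpos hzy)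
    · have hyz : 0 < W y z := by nlinarith [h3]
      have := ht2 hyz hzxpos
      apply hxy0
      linarith
  -- conclude via Fubini
  have key2 : ∀ᵐ x ∂μ, ∀ᵐ y ∂μ, ∀ᵐ z ∂μ, (x, y) ∈ A → (x, z) ∉ A := by
    filter_upwards [Measure.ae_ae_of_ae_prod key] with x hx
    exact Measure.ae_ae_of_ae_prod hx
  have hAnull : μ.prod μ A = 0 := by
    rw [Measure.measure_prod_null hAmeas]
    filter_upwards [key2] with x hx
    by_contra hne
    have hex : ∃ y, y ∈ Prod.mk x ⁻¹' A ∧ ∀ᵐ z ∂μ, (x, y) ∈ A → (x, z) ∉ A := by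
      by_contra hno
      push_neg at hno
      apply hne
      refine measure_mono_null (fun y hy => ?_) (ae_iff.mp hx)
      exact fun h => hno y hy (h.mono fun z hz hP => hz hP.1 hP.2)
    obtain ⟨y, hyA, hQ⟩ := hex
    have h0 : ∀ᵐ z ∂μ, (x, z) ∉ A := by filter_upwards [hQ] with z hz using hz hyA
    refine hne ?_
    have := ae_iff.mp h0
    simp only [not_not] at this
    exact this
  have hae : ∀ᵐ p ∂(μ.prod μ), p ∉ A := by
    rw [ae_iff]
    simpa only [not_not, Set.setOf_mem_eq] using hAnull
  filter_upwards [hae] with p hp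
  simp only [hA, Set.mem_setOf_eq, not_not] at hp
  exact hp
end
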